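/- arXiv:1506.03913 — 7 statements merged into one kernel-verified Lean document; each statement's English description precedes it below -/
import Mathlib

section
/- Let G be a complete multipartite graph. In any (q,2)-tree-coloring of G, every color class of size at least 4 is an independent set of G. -/
open SimpleGraph

noncomputable section

lemma no_tri {α : Type*} {G : SimpleGraph α} (hG : G.IsAcyclic) {a b c : α}
    (hab : G.Adj a b) (hbc : G.Adj b c) (hca : G.Adj c a) : False := by
  have hcyc : (Walk.cons hab (Walk.cons hbc (Walk.cons hca Walk.nil))).IsCycle := by
    simp [Walk.isCycle_def, Walk.isTrail_def, hab.ne, hbc.ne, hca.ne, hab.ne', hbc.ne', hca.ne']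
  exact hG _ hcyc

lemma no_sq {α : Type*} {G : SimpleGraph α} (hG : G.IsAcyclic) {a b c d : α}
    (hab : G.Adj a b) (hbc : G.Adj b c) (hcd : G.Adj c d) (hda : G.Adj d a)
    (hac : a ≠ c) (hbd : b ≠ d) : False := by
  have hcyc : (Walk.cons hab (Walk.cons hbc (Walk.cons hcd (Walk.cons hda Walk.nil)))).IsCycle := by
    simp [Walk.isCycle_def, Walk.isTrail_def, hab.ne, hbc.ne, hcd.ne, hda.ne, hab.ne', hbc.ne',
      hcd.ne', hda.ne', hac, hbd, hac.symm, hbd.symm, Sym2.eq_iff]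
  exact hG _ hcyc


/-- `f` is a `(q,2)`-tree-coloring of `G`: the subgraph induced by each color class
is a forest (acyclic) in which every vertex has at most `2` neighbours inside its class. -/
def IsTreeColoring2 {V : Type*} (G : SimpleGraph V) (q : ℕ) (f : V → Fin q) : Prop :=
  (∀ c : Fin q, (G.induce (f ⁻¹' {c})).IsAcyclic) ∧
    ∀ v : V, Set.ncard {w : V | G.Adj v w ∧ f w = f v} ≤ 2

/-- The coloring `f` is equitable: any two color classes differ in size by at most one. -/
def IsEquitableColoring {V : Type*} (q : ℕ) (f : V → Fin q) : Prop :=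
  ∀ c₁ c₂ : Fin q, Set.ncard (f ⁻¹' {c₁}) ≤ Set.ncard (f ⁻¹' {c₂}) + 1

/-- `G` has an equitable `(q,2)`-tree-coloring. -/
def HasEquitableTreeColoring2 {V : Type*} (G : SimpleGraph V) (q : ℕ) : Prop :=
  ∃ f : V → Fin q, IsTreeColoring2 G q f ∧ IsEquitableColoring q f

/-- `G` has a proper equitable `q`-coloring. -/
def HasProperEquitableColoring {V : Type*} (G : SimpleGraph V) (q : ℕ) : Prop :=
  ∃ f : V → Fin q, (∀ v w : V, G.Adj v w → f v ≠ f w) ∧ IsEquitableColoring q f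

/-- The strong equitable vertex 2-arboricity `va≡₂(G)`: the minimum `p` such that `G`
has an equitable `(q,2)`-tree-coloring for every `q ≥ p`. -/
def va2 {V : Type*} (G : SimpleGraph V) : ℕ :=
  sInf {p : ℕ | ∀ q : ℕ, p ≤ q → HasEquitableTreeColoring2 G q}

/-- The parameter `d` from the definition of `p(q : n₁, …, n_k)`: the minimum value
greater than `⌊(n₁+⋯+n_k)/q⌋` such that (i) some two distinct `nᵢ, nⱼ` are not divisible
by `d`, or (ii) some `nⱼ` has `nⱼ/⌊nⱼ/d⌋ > d+1`. -/
def dVal {ι : Type*} [Fintype ι] (q : ℕ) (ns : ι → ℕ) : ℕ :=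
  sInf {d : ℕ |
    (∑ i, ns i) / q < d ∧
      ((∃ i j : ι, i ≠ j ∧ ¬ d ∣ ns i ∧ ¬ d ∣ ns j) ∨
        ∃ j : ι, ((d : ℚ) + 1) < (ns j : ℚ) / ((ns j / d : ℕ) : ℚ))}

/-- `p(q : n₁, …, n_k) = ⌈n₁/d⌉ + ⋯ + ⌈n_k/d⌉` where `d = dVal q ns`. -/
def pVal {ι : Type*} [Fintype ι] (q : ℕ) (ns : ι → ℕ) : ℕ :=
  ∑ i, ⌈(ns i : ℚ) / (dVal q ns : ℚ)⌉₊

/-- The part of a vertex of the complete tripartite graph. -/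
def triPart {l m n : ℕ} : Fin l ⊕ Fin m ⊕ Fin n → Fin 3
  | Sum.inl _ => 0
  | Sum.inr (Sum.inl _) => 1
  | Sum.inr (Sum.inr _) => 2

/-- The complete tripartite graph `K_{l,m,n}`. -/
def completeTripartiteGraph (l m n : ℕ) : SimpleGraph (Fin l ⊕ Fin m ⊕ Fin n) where
  Adj v w := triPart v ≠ triPart w
  symm := ⟨fun _ _ h => Ne.symm h⟩
  loopless := ⟨fun _ h => h rfl⟩

/-- Condition A for a triple `(l,m,n)`. -/
def ConditionA (l m n : ℕ) : Prop :=
  ∃ j h k : ℕ, 0 < j ∧ 0 < h ∧ 0 < k ∧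
    ((l, m, n) = (4 * j, 4 * h, 4 * k - 1) ∨
     (l, m, n) = (4 * j, 4 * h - 1, 4 * k) ∨
     (l, m, n) = (4 * j - 1, 4 * h, 4 * k) ∨
     (l, m, n) = (4 * j, 4 * h - 2, 4 * k - 3) ∨
     (l, m, n) = (4 * j, 4 * h - 3, 4 * k - 2) ∨
     (l, m, n) = (4 * j - 2, 4 * h, 4 * k - 3) ∨
     (l, m, n) = (4 * j - 2, 4 * h - 3, 4 * k) ∨
     (l, m, n) = (4 * j - 3, 4 * h, 4 * k - 2) ∨
     (l, m, n) = (4 * j - 3, 4 * h - 2, 4 * k))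

/-- Condition B for a triple `(l,m,n)`. -/
def ConditionB (l m n : ℕ) : Prop :=
  ∃ j h k : ℕ, 0 < j ∧ 0 < h ∧ 0 < k ∧
    ((l, m, n) = (4 * (j + 2) + 3, 4 * h, 4 * k) ∨
     (l, m, n) = (4 * j, 4 * (h + 2) + 3, 4 * k) ∨
     (l, m, n) = (4 * j, 4 * h, 4 * (k + 2) + 3) ∨
     (l, m, n) = (4 * (j + 1) + 2, 4 * h + 1, 4 * k) ∨
     (l, m, n) = (4 * (j + 1) + 2, 4 * h, 4 * k + 1) ∨
     (l, m, n) = (4 * j + 1, 4 * (h + 1) + 2, 4 * k) ∨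
     (l, m, n) = (4 * j + 1, 4 * h, 4 * (k + 1) + 2) ∨
     (l, m, n) = (4 * j, 4 * (h + 1) + 2, 4 * k + 1) ∨
     (l, m, n) = (4 * j, 4 * h + 1, 4 * (k + 1) + 2) ∨
     (l, m, n) = (4 * j + 1, 4 * h + 1, 4 * k + 1))

theorem statement0 {ι : Type*} [Fintype ι] (V : ι → Type*) [∀ i, Fintype (V i)]
    (q : ℕ) (f : (Σ i, V i) → Fin q)
    (hf : IsTreeColoring2 (completeMultipartiteGraph V) q f)
    (c : Fin q) (hc : 4 ≤ Set.ncard (f ⁻¹' {c})) :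
    ∀ v w : Σ i, V i, f v = c → f w = c →
      ¬ (completeMultipartiteGraph V).Adj v w := by
  intro v w hv hw hadj
  set G := completeMultipartiteGraph V with hG
  have hne : v.1 ≠ w.1 := hadj
  have hadjiff : ∀ a b : Σ i, V i, G.Adj a b ↔ a.1 ≠ b.1 := fun a b => Iff.rfl
  set S : Set (Σ i, V i) := f ⁻¹' {c} with hS
  have hvS : v ∈ S := hv
  have hwS : w ∈ S := hw
  have hvw : v ≠ w := fun h => hne (by rw [h])
  -- get two more elements
  have h2 : 1 < (S \ {v, w}).ncard := by
    have h1 : S.ncard ≤ (S \ {v, w}).ncard + ({v, w} : Set _).ncard :=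
      Set.ncard_le_ncard_diff_add_ncard _ _
    have h3 : ({v, w} : Set _).ncard ≤ 2 := by
      have := Set.ncard_insert_le v ({w} : Set _)
      simpa using this
    omega
  obtain ⟨x, y, hx, hy, hxy⟩ := (Set.one_lt_ncard_iff (Set.toFinite _)).mp h2
  obtain ⟨hxS, hxvw⟩ := hx
  obtain ⟨hyS, hyvw⟩ := hy
  simp only [Set.mem_insert_iff, Set.mem_singleton_iff, not_or] at hxvw hyvw
  have hacyc := hf.1 c
  -- every other vertex of S lies in part v.1 or w.1
  have key : ∀ u : Σ i, V i, u ∈ S → u ≠ v → u ≠ w → u.1 = v.1 ∨ u.1 = w.1 := by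
    intro u huS huv huw
    by_contra h
    push_neg at h
    exact no_tri hacyc (a := (⟨v, hvS⟩ : S)) (b := ⟨w, hwS⟩) (c := ⟨u, huS⟩)
      hne (fun hh => h.2 hh.symm) h.1
  have hfx : f x = f v := by rw [hv]; exact hxS
  have hfy : f y = f v := by rw [hv]; exact hyS
  have hfv' : f v = f w := by rw [hv, hw]
  have hdeg := hf.2
  -- if two others are in the same part as v, then w has ≥ 3 neighbors in its class
  have degcase : ∀ a b : Σ i, V i, a ∈ S → b ∈ S → a ≠ b → a ≠ v → b ≠ v →
      a.1 = v.1 → b.1 = v.1 → False := by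
    intro a b haS hbS hab hav hbv ha hb
    have hsub : {v, a, b} ⊆ {u | G.Adj w u ∧ f u = f w} := by
      rintro z (rfl | rfl | rfl)
      · exact ⟨hadj.symm, hfv'⟩
      · exact ⟨fun hh => hne ((hh.trans ha).symm), by rw [hw]; exact haS⟩
      · exact ⟨fun hh => hne ((hh.trans hb).symm), by rw [hw]; exact hbS⟩
    have h3 : ({v, a, b} : Set (Σ i, V i)).ncard = 3 :=
      Set.ncard_eq_three.mpr ⟨v, a, b, (Ne.symm hav), (Ne.symm hbv), hab, rfl⟩
    have := Set.ncard_le_ncard hsub (Set.toFinite _)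
    rw [h3] at this
    have := hdeg w
    omega
  have degcase' : ∀ a b : Σ i, V i, a ∈ S → b ∈ S → a ≠ b → a ≠ w → b ≠ w →
      a.1 = w.1 → b.1 = w.1 → False := by
    intro a b haS hbS hab haw hbw ha hb
    have hsub : {w, a, b} ⊆ {u | G.Adj v u ∧ f u = f v} := by
      rintro z (rfl | rfl | rfl)
      · exact ⟨hadj, hfv'.symm⟩
      · exact ⟨fun hh => hne (hh.trans ha), by rw [hv]; exact haS⟩
      · exact ⟨fun hh => hne (hh.trans hb), by rw [hv]; exact hbS⟩
    have h3 : ({w, a, b} : Set (Σ i, V i)).ncard = 3 :=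
      Set.ncard_eq_three.mpr ⟨w, a, b, (Ne.symm haw), (Ne.symm hbw), hab, rfl⟩
    have := Set.ncard_le_ncard hsub (Set.toFinite _)
    rw [h3] at this
    have := hdeg v
    omega
  -- 4-cycle case
  have square : ∀ a b : Σ i, V i, a ∈ S → b ∈ S → a ≠ v → a ≠ w → b ≠ v → b ≠ w →
      a.1 = v.1 → b.1 = w.1 → False := by
    intro a b haS hbS hav haw hbv hbw ha hb
    refine no_sq hacyc (a := (⟨v, hvS⟩ : S)) (b := ⟨w, hwS⟩) (c := ⟨a, haS⟩) (d := ⟨b, hbS⟩)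
      hne (fun hh => hne (hh.trans ha).symm) (fun hh : a.1 = b.1 => hne ((ha.symm.trans hh).trans hb))
      (fun hh : b.1 = v.1 => hne (hb.symm.trans hh).symm) ?_ ?_
    · exact fun hh => hav (Subtype.mk_eq_mk.mp hh).symm
    · exact fun hh => hbw (Subtype.mk_eq_mk.mp hh).symm
  rcases key x hxS hxvw.1 hxvw.2 with hx1 | hx1 <;> rcases key y hyS hyvw.1 hyvw.2 with hy1 | hy1
  · exact degcase x y hxS hyS hxy hxvw.1 hyvw.1 hx1 hy1
  · exact square x y hxS hyS hxvw.1 hxvw.2 hyvw.1 hyvw.2 hx1 hy1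
  · exact square y x hyS hxS hyvw.1 hyvw.2 hxvw.1 hxvw.2 hy1 hx1
  · exact degcase' x y hxS hyS hxy hxvw.2 hyvw.2 hx1 hy1
end
end

section
/- Let G be a complete multipartite graph with n vertices and let q be a positive integer with n/q ≥ 4 (equivalently n ≥ 4q). Then every equitable (q,2)-tree-coloring of G is a proper equitable q-coloring of G, i.e., every color class is an independent set and the sizes of any two color classes differ by at most one. -/
open SimpleGraph

noncomputable section

lemma c4_not_acyclic {V : Type*} (H : SimpleGraph V) (a b c d : V)
    (hab : H.Adj a b) (hbc : H.Adj b c) (hcd : H.Adj c d) (hda : H.Adj d a)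
    (h1 : a ≠ b) (h2 : a ≠ c) (h3 : a ≠ d) (h4 : b ≠ c) (h5 : b ≠ d) (h6 : c ≠ d) :
    ¬ H.IsAcyclic := by
  intro hac
  exact hac (Walk.cons hab (Walk.cons hbc (Walk.cons hcd (Walk.cons hda Walk.nil))))
    (by
      rw [Walk.cons_isCycle_iff]
      constructor
      · simp [Walk.cons_isPath_iff, h1.symm, h2.symm, h3.symm, h4.symm, h5.symm, h6.symm,
          h1, h2, h3, h4, h5, h6]
      · simp [Sym2.eq, Sym2.rel_iff', h1, h2, h3, h4, h5, h6, h1.symm, h2.symm, h5.symm])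

theorem statement1 {ι : Type*} [Fintype ι] (V : ι → Type*) [∀ i, Fintype (V i)]
    (q : ℕ) (hq : 0 < q) (hn : 4 * q ≤ Fintype.card (Σ i, V i))
    (f : (Σ i, V i) → Fin q)
    (hf : IsTreeColoring2 (completeMultipartiteGraph V) q f)
    (he : IsEquitableColoring q f) :
    (∀ c : Fin q, ∀ v w : Σ i, V i, f v = c → f w = c →
      ¬ (completeMultipartiteGraph V).Adj v w) ∧ IsEquitableColoring q f := by
  classical
  refine ⟨?_, he⟩
  set N : Fin q → ℕ := fun c => Set.ncard (f ⁻¹' {c}) with hN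
  have hsum : ∑ c, N c = Fintype.card (Σ i, V i) := by
    have hNc : ∀ c, N c = (Finset.univ.filter fun v => f v = c).card := by
      intro c
      rw [← Set.ncard_coe_finset]
      show (f ⁻¹' {c}).ncard = _
      congr 1
      ext x; simp
    simp only [hNc]
    rw [← Finset.card_univ]
    exact (Finset.card_eq_sum_card_fiberwise (fun x _ => Finset.mem_univ (f x))).symm
  have hge4 : ∀ c : Fin q, 4 ≤ N c := by
    by_contra h
    push_neg at h
    obtain ⟨c₀, hc₀⟩ := h
    have hle : ∀ c, N c ≤ N c₀ + 1 := fun c => he c c₀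
    have hsplit : ∑ c, N c = N c₀ + (Finset.univ.erase c₀).sum N :=
      (Finset.add_sum_erase _ _ (Finset.mem_univ c₀)).symm
    have h2 : (Finset.univ.erase c₀).sum N ≤ (q - 1) * 4 := by
      calc (Finset.univ.erase c₀).sum N ≤ (Finset.univ.erase c₀).card * 4 :=
            Finset.sum_le_card_nsmul _ _ 4 (fun c _ => by have := hle c; omega)
        _ = (q - 1) * 4 := by
            rw [Finset.card_erase_of_mem (Finset.mem_univ c₀)]
            simp
    omega
  intro c v w hv hw hadj
  set S : Set (Σ i, V i) := f ⁻¹' {c} with hS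
  have hvw : v.1 ≠ w.1 := hadj
  set A : Set (Σ i, V i) := {x ∈ S | x.1 = v.1} with hA
  set B : Set (Σ i, V i) := {x ∈ S | x.1 = w.1} with hB
  have hAS : A ⊆ S := fun x hx => hx.1
  have hBS : B ⊆ S := fun x hx => hx.1
  have hdiffA : S \ A = {x | (completeMultipartiteGraph V).Adj v x ∧ f x = f v} := by
    ext x
    simp only [hA, hS, Set.mem_diff, Set.mem_setOf_eq, Set.mem_preimage,
      Set.mem_singleton_iff, hv, completeMultipartiteGraph]
    constructor
    · rintro ⟨hx, hx2⟩
      exact ⟨fun h => hx2 ⟨hx, h.symm⟩, hx⟩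
    · rintro ⟨h1, h2⟩
      exact ⟨h2, fun h => h1 h.2.symm⟩
  have hdiffB : S \ B = {x | (completeMultipartiteGraph V).Adj w x ∧ f x = f w} := by
    ext x
    simp only [hB, hS, Set.mem_diff, Set.mem_setOf_eq, Set.mem_preimage,
      Set.mem_singleton_iff, hw, completeMultipartiteGraph]
    constructor
    · rintro ⟨hx, hx2⟩
      exact ⟨fun h => hx2 ⟨hx, h.symm⟩, hx⟩
    · rintro ⟨h1, h2⟩
      exact ⟨h2, fun h => h1 h.2.symm⟩
  have hdegA : (S \ A).ncard ≤ 2 := by rw [hdiffA]; exact hf.2 v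
  have hdegB : (S \ B).ncard ≤ 2 := by rw [hdiffB]; exact hf.2 w
  have hsplitA : (S \ A).ncard + A.ncard = S.ncard :=
    Set.ncard_diff_add_ncard_of_subset hAS
  have hsplitB : (S \ B).ncard + B.ncard = S.ncard :=
    Set.ncard_diff_add_ncard_of_subset hBS
  have hdisj : Disjoint A B := by
    rw [Set.disjoint_left]
    rintro x ⟨_, hxa⟩ ⟨_, hxb⟩
    exact hvw (hxa ▸ hxb)
  have hABle : A.ncard + B.ncard ≤ S.ncard := by
    rw [← Set.ncard_union_eq hdisj (Set.toFinite _) (Set.toFinite _)]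
    exact Set.ncard_le_ncard (Set.union_subset hAS hBS) (Set.toFinite _)
  have hS4 : 4 ≤ S.ncard := hge4 c
  have hAcard : A.ncard = 2 := by omega
  have hBcard : B.ncard = 2 := by omega
  obtain ⟨v', hv'A, hv'v⟩ := Set.exists_ne_of_one_lt_ncard (by omega : 1 < A.ncard) v
  obtain ⟨w', hw'B, hw'w⟩ := Set.exists_ne_of_one_lt_ncard (by omega : 1 < B.ncard) w
  have hwB : w ∈ B := ⟨hw, rfl⟩
  have hac := hf.1 c
  have key : ∀ x y : ↥S, x.val.1 ≠ y.val.1 →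
      ((completeMultipartiteGraph V).induce S).Adj x y := fun x y h => h
  refine c4_not_acyclic _ (⟨v, hv⟩ : ↥S) ⟨w, hw⟩ ⟨v', hv'A.1⟩ ⟨w', hw'B.1⟩
    (key _ _ hvw) (key _ _ ?_) (key _ _ ?_) (key _ _ ?_) ?_ ?_ ?_ ?_ ?_ ?_ hac
  · rw [hv'A.2]; exact hvw.symm
  · rw [hv'A.2, hw'B.2]; exact hvw
  · rw [hw'B.2]; exact hvw.symm
  · simp only [ne_eq, Subtype.mk.injEq, Subtype.ext_iff]
    intro h; exact hvw (h ▸ rfl)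
  · simp only [ne_eq, Subtype.mk.injEq, Subtype.ext_iff]
    exact fun h => hv'v h.symm
  · simp only [ne_eq, Subtype.mk.injEq, Subtype.ext_iff]
    intro h
    exact hvw (h ▸ hw'B.2.symm ▸ rfl)
  · simp only [ne_eq, Subtype.mk.injEq, Subtype.ext_iff]
    intro h
    exact hvw ((h ▸ hv'A.2).symm)
  · simp only [ne_eq, Subtype.mk.injEq, Subtype.ext_iff]
    exact fun h => hw'w h.symm
  · simp only [ne_eq, Subtype.mk.injEq, Subtype.ext_iff]
    intro h
    exact hvw (hv'A.2.symm.trans (h ▸ hw'B.2))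
end
end

section
/- Let m and n be positive integers with m + n = 4b + c, where b is a nonnegative integer and 0 ≤ c ≤ 3. Then the complete bipartite graph K_{m,n} has an equitable (t,2)-tree-coloring for every t ≥ b + 1. -/
open SimpleGraph

noncomputable section

lemma kmn_edgeless_acyclic {V : Type*} (G : SimpleGraph V) (h : ∀ a b, ¬ G.Adj a b) :
    G.IsAcyclic := by
  intro v p hp
  cases p with
  | nil => exact hp.ne_nil rfl
  | cons h' q => exact h _ _ h'

lemma kmn_star_acyclic {V : Type*} (G : SimpleGraph V) (x : V)
    (h : ∀ a b, G.Adj a b → a = x ∨ b = x) : G.IsAcyclic := by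
  intro v p hp
  cases p with
  | nil => exact hp.ne_nil rfl
  | cons h1 p1 =>
    cases p1 with
    | nil => exact G.irrefl h1
    | cons h2 p2 =>
      cases p2 with
      | nil => simpa using hp.three_le_length
      | @cons u2 u3 _ h3 p3 =>
        have hnd := hp.support_nodup
        simp only [SimpleGraph.Walk.support_cons, List.tail_cons, List.nodup_cons,
          List.mem_cons, not_or] at hnd
        obtain ⟨⟨h12, h1p⟩, h2p, _⟩ := hnd
        have hv : v ∈ p3.support := p3.end_mem_support
        have hu3 : u3 ∈ p3.support := p3.start_mem_support
        rcases eq_or_ne v x with rfl | hvx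
        · rcases h _ _ h2 with rfl | rfl
          · exact h1p hv
          · exact h2p hv
        · rcases h _ _ h1 with rfl | rfl
          · exact hvx rfl
          · rcases h _ _ h3 with rfl | rfl
            · exact h12 rfl
            · exact h1p hu3

lemma kmn_fin_card_helper (m lo hi : ℕ) :
    Set.ncard {i : Fin m | lo ≤ i.val ∧ i.val < hi} = min hi m - lo := by
  classical
  have h1 : {i : Fin m | lo ≤ i.val ∧ i.val < hi} =
      ↑(Finset.univ.filter (fun i : Fin m => lo ≤ i.val ∧ i.val < hi)) := by
    ext i; simp
  rw [h1, Set.ncard_coe_finset]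
  have h2 : (Finset.univ.filter (fun i : Fin m => lo ≤ i.val ∧ i.val < hi)).card
      = ((Finset.range m).filter (fun p => lo ≤ p ∧ p < hi)).card := by
    apply Finset.card_bij (fun i _ => i.val)
    · intro a ha
      simp only [Finset.mem_filter, Finset.mem_univ, true_and] at ha
      simp only [Finset.mem_filter, Finset.mem_range]
      exact ⟨a.isLt, ha⟩
    · intro a _ b _ hab; exact Fin.ext hab
    · intro q hq
      simp only [Finset.mem_filter, Finset.mem_range] at hq
      exact ⟨⟨q, hq.1⟩, by simp [hq.2.1, hq.2.2], rfl⟩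
  rw [h2]
  have h3 : (Finset.range m).filter (fun p => lo ≤ p ∧ p < hi) = Finset.Ico lo (min hi m) := by
    ext p; simp [Finset.mem_Ico]; omega
  rw [h3, Nat.card_Ico]

lemma kmn_g_spec (L : ℕ → ℕ) (hmono : Monotone L) (hL0 : L 0 = 0) {t N : ℕ} (ht : 1 ≤ t)
    (hLt : N ≤ L t) {p : ℕ} (hp : p < N) (c : ℕ) :
    sInf {c | p < L (c+1)} = c ↔ L c ≤ p ∧ p < L (c+1) := by
  set S : Set ℕ := {c | p < L (c+1)} with hS
  have hne : (t-1) ∈ S := by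
    simp only [hS, Set.mem_setOf_eq]
    have h : t - 1 + 1 = t := by omega
    rw [h]; omega
  have hmem : sInf S ∈ S := Nat.sInf_mem ⟨_, hne⟩
  constructor
  · rintro rfl
    refine ⟨?_, hmem⟩
    rcases Nat.eq_zero_or_pos (sInf S) with h0 | h0
    · rw [h0, hL0]; omega
    · have hlt : sInf S - 1 < sInf S := by omega
      have hnm : sInf S - 1 ∉ S := Nat.notMem_of_lt_sInf hlt
      simp only [hS, Set.mem_setOf_eq, not_lt] at hnm
      have heq : sInf S - 1 + 1 = sInf S := by omega
      rw [heq] at hnm; exact hnm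
  · rintro ⟨h1, h2⟩
    have hle : sInf S ≤ c := Nat.sInf_le h2
    rcases eq_or_lt_of_le hle with h | h
    · exact h
    · exfalso
      have hmono' : L (sInf S + 1) ≤ L c := hmono (by omega)
      have hm2 : p < L (sInf S + 1) := hmem
      omega

lemma kmn_master (m n t : ℕ) (ht : 1 ≤ t) (L : ℕ → ℕ) (hmono : Monotone L)
    (hL0 : L 0 = 0) (hLt : L t = m + n) (k0 : ℕ)
    (hsize : ∀ c, c < t → L c + k0 ≤ L (c+1) ∧ L (c+1) ≤ L c + k0 + 1)
    (hshape : ∀ c, c < t →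
      (min (L (c+1)) m - L c = 0) ∨ ((L (c+1) - m) - (L c - m) = 0) ∨
      (min (L (c+1)) m - L c = 1 ∧ (L (c+1) - m) - (L c - m) ≤ 2) ∨
      ((L (c+1) - m) - (L c - m) = 1 ∧ min (L (c+1)) m - L c ≤ 2)) :
    HasEquitableTreeColoring2 (completeBipartiteGraph (Fin m) (Fin n)) t := by
  classical
  set N := m + n with hN
  set g : ℕ → ℕ := fun p => sInf {c | p < L (c+1)} with hgdef
  have hg : ∀ p, p < N → ∀ c : ℕ, (g p = c ↔ L c ≤ p ∧ p < L (c+1)) := by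
    intro p hp c
    exact kmn_g_spec L hmono hL0 ht (le_of_eq hLt.symm) hp c
  have hglt : ∀ p, p < N → g p < t := by
    intro p hp
    have hne : (t-1) ∈ {c | p < L (c+1)} := by
      simp only [Set.mem_setOf_eq]
      have h : t - 1 + 1 = t := by omega
      rw [h, hLt]
      exact hp
    have h2 : g p ≤ t - 1 := Nat.sInf_le hne
    omega
  have hpos : ∀ v : Fin m ⊕ Fin n, Sum.elim (fun i : Fin m => (i : ℕ))
      (fun j : Fin n => m + (j : ℕ)) v < N := by
    rintro (i | j)
    · simpa using lt_of_lt_of_le i.isLt (Nat.le_add_right m n)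
    · have := j.isLt
      simp only [Sum.elim_inr]
      omega
  set f : Fin m ⊕ Fin n → Fin t := fun v =>
    ⟨g (Sum.elim (fun i : Fin m => (i : ℕ)) (fun j : Fin n => m + (j : ℕ)) v),
      hglt _ (hpos v)⟩ with hfdef
  have hfl : ∀ (i : Fin m) (c : Fin t), f (Sum.inl i) = c ↔ L c.val ≤ i.val ∧ i.val < L (c.val+1) := by
    intro i c
    rw [hfdef]
    simp only [Sum.elim_inl, Fin.ext_iff]
    exact hg i.val (lt_of_lt_of_le i.isLt (Nat.le_add_right m n)) c.val
  have hfr : ∀ (j : Fin n) (c : Fin t), f (Sum.inr j) = c ↔ L c.val ≤ m + j.val ∧ m + j.val < L (c.val+1) := by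
    intro j c
    rw [hfdef]
    simp only [Sum.elim_inr, Fin.ext_iff]
    exact hg (m + j.val) (by omega) c.val
  have hcardA : ∀ c : Fin t, Set.ncard {i : Fin m | f (Sum.inl i) = c}
      = min (L (c.val+1)) m - L c.val := by
    intro c
    have he : {i : Fin m | f (Sum.inl i) = c}
        = {i : Fin m | L c.val ≤ i.val ∧ i.val < L (c.val+1)} := by
      ext i; simp only [Set.mem_setOf_eq]; exact hfl i c
    rw [he, kmn_fin_card_helper]
  have hLleN : ∀ c : Fin t, L (c.val + 1) ≤ m + n := by
    intro c
    have := hmono (show c.val + 1 ≤ t from c.isLt)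
    omega
  have hcardB : ∀ c : Fin t, Set.ncard {j : Fin n | f (Sum.inr j) = c}
      = (L (c.val+1) - m) - (L c.val - m) := by
    intro c
    have he : {j : Fin n | f (Sum.inr j) = c}
        = {j : Fin n | (L c.val - m) ≤ j.val ∧ j.val < (L (c.val+1) - m)} := by
      ext j
      simp only [Set.mem_setOf_eq]
      rw [hfr j c]
      have hj := j.isLt
      have := hLleN c
      constructor <;> intro h <;> omega
    rw [he, kmn_fin_card_helper]
    have := hLleN c
    have hmin : min (L (c.val+1) - m) n = L (c.val+1) - m := by omega
    rw [hmin]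
  have hpre : ∀ c : Fin t, (f ⁻¹' {c}).ncard
      = Set.ncard {i : Fin m | f (Sum.inl i) = c} + Set.ncard {j : Fin n | f (Sum.inr j) = c} := by
    intro c
    have hun : f ⁻¹' {c} = Sum.inl '' {i : Fin m | f (Sum.inl i) = c}
        ∪ Sum.inr '' {j : Fin n | f (Sum.inr j) = c} := by
      ext v
      rcases v with i | j <;>
        simp [Set.mem_preimage, Set.mem_singleton_iff]
    rw [hun, Set.ncard_union_eq (by
        rw [Set.disjoint_left]
        rintro _ ⟨i, _, rfl⟩ ⟨j, _, hj⟩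
        exact nomatch hj),
      Set.ncard_image_of_injective _ Sum.inl_injective,
      Set.ncard_image_of_injective _ Sum.inr_injective]
  have hmonoc : ∀ c : Fin t, L c.val ≤ L (c.val + 1) := fun c => hmono (Nat.le_succ _)
  have hsizec : ∀ c : Fin t, (f ⁻¹' {c}).ncard = L (c.val + 1) - L c.val := by
    intro c
    rw [hpre, hcardA, hcardB]
    have := hmonoc c
    omega
  refine ⟨f, ⟨?_, ?_⟩, ?_⟩
  · -- acyclicity
    intro c
    rcases hshape c.val c.isLt with h0 | h0 | ⟨h1, h2⟩ | ⟨h1, h2⟩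
    · -- no left vertices
      have hA : {i : Fin m | f (Sum.inl i) = c} = ∅ := by
        have hz : Set.ncard {i : Fin m | f (Sum.inl i) = c} = 0 := by rw [hcardA]; exact h0
        exact (Set.ncard_eq_zero (Set.toFinite _)).mp hz
      apply kmn_edgeless_acyclic
      rintro ⟨a, ha⟩ ⟨b, hb⟩ hadj
      rcases a with i | j
      · exact absurd (Set.mem_preimage.mp ha) (by
          have : i ∉ {i : Fin m | f (Sum.inl i) = c} := by rw [hA]; exact Set.notMem_empty i
          simpa using this)
      · rcases b with i' | j'
        · exact absurd (Set.mem_preimage.mp hb) (by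
            have : i' ∉ {i : Fin m | f (Sum.inl i) = c} := by rw [hA]; exact Set.notMem_empty i'
            simpa using this)
        · simp [completeBipartiteGraph] at hadj
    · -- no right vertices
      have hB : {j : Fin n | f (Sum.inr j) = c} = ∅ := by
        have hz : Set.ncard {j : Fin n | f (Sum.inr j) = c} = 0 := by rw [hcardB]; exact h0
        exact (Set.ncard_eq_zero (Set.toFinite _)).mp hz
      apply kmn_edgeless_acyclic
      rintro ⟨a, ha⟩ ⟨b, hb⟩ hadj
      rcases a with i | j
      · rcases b with i' | j'
        · simp [completeBipartiteGraph] at hadj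
        · exact absurd (Set.mem_preimage.mp hb) (by
            have : j' ∉ {j : Fin n | f (Sum.inr j) = c} := by rw [hB]; exact Set.notMem_empty j'
            simpa using this)
      · exact absurd (Set.mem_preimage.mp ha) (by
          have : j ∉ {j : Fin n | f (Sum.inr j) = c} := by rw [hB]; exact Set.notMem_empty j
          simpa using this)
    · -- exactly one left vertex: star
      have hone : Set.ncard {i : Fin m | f (Sum.inl i) = c} = 1 := by rw [hcardA]; exact h1
      obtain ⟨i0, hi0⟩ := Set.ncard_eq_one.mp hone
      have hi0c : f (Sum.inl i0) = c := by
        have : i0 ∈ {i : Fin m | f (Sum.inl i) = c} := by rw [hi0]; rfl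
        exact this
      apply kmn_star_acyclic _ (⟨Sum.inl i0, by simpa using hi0c⟩ : (f ⁻¹' {c} : Set _))
      rintro ⟨a, ha⟩ ⟨b, hb⟩ hadj
      rcases a with i | j
      · left
        have : i ∈ {i : Fin m | f (Sum.inl i) = c} := Set.mem_preimage.mp ha
        rw [hi0] at this
        exact Subtype.ext (by simpa using this)
      · rcases b with i' | j'
        · right
          have : i' ∈ {i : Fin m | f (Sum.inl i) = c} := Set.mem_preimage.mp hb
          rw [hi0] at this
          exact Subtype.ext (by simpa using this)
        · simp [completeBipartiteGraph] at hadj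
    · -- exactly one right vertex: star
      have hone : Set.ncard {j : Fin n | f (Sum.inr j) = c} = 1 := by rw [hcardB]; exact h1
      obtain ⟨j0, hj0⟩ := Set.ncard_eq_one.mp hone
      have hj0c : f (Sum.inr j0) = c := by
        have : j0 ∈ {j : Fin n | f (Sum.inr j) = c} := by rw [hj0]; rfl
        exact this
      apply kmn_star_acyclic _ (⟨Sum.inr j0, by simpa using hj0c⟩ : (f ⁻¹' {c} : Set _))
      rintro ⟨a, ha⟩ ⟨b, hb⟩ hadj
      rcases a with i | j
      · rcases b with i' | j'
        · simp [completeBipartiteGraph] at hadj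
        · right
          have : j' ∈ {j : Fin n | f (Sum.inr j) = c} := Set.mem_preimage.mp hb
          rw [hj0] at this
          exact Subtype.ext (by simpa using this)
      · left
        have : j ∈ {j : Fin n | f (Sum.inr j) = c} := Set.mem_preimage.mp ha
        rw [hj0] at this
        exact Subtype.ext (by simpa using this)
  · -- degree condition
    rintro (i | j)
    · have hset : {w | (completeBipartiteGraph (Fin m) (Fin n)).Adj (Sum.inl i) w ∧ f w = f (Sum.inl i)}
          = Sum.inr '' {j : Fin n | f (Sum.inr j) = f (Sum.inl i)} := by
        ext w
        rcases w with i' | j' <;> simp [completeBipartiteGraph]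
      rw [hset, Set.ncard_image_of_injective _ Sum.inr_injective, hcardB]
      have hmem : 0 < Set.ncard {i' : Fin m | f (Sum.inl i') = f (Sum.inl i)} :=
        (Set.ncard_pos (Set.toFinite _)).mpr ⟨i, rfl⟩
      rw [hcardA] at hmem
      rcases hshape (f (Sum.inl i)).val (f (Sum.inl i)).isLt with h | h | ⟨h1, h2⟩ | ⟨h1, h2⟩ <;> omega
    · have hset : {w | (completeBipartiteGraph (Fin m) (Fin n)).Adj (Sum.inr j) w ∧ f w = f (Sum.inr j)}
          = Sum.inl '' {i : Fin m | f (Sum.inl i) = f (Sum.inr j)} := by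
        ext w
        rcases w with i' | j' <;> simp [completeBipartiteGraph]
      rw [hset, Set.ncard_image_of_injective _ Sum.inl_injective, hcardA]
      have hmem : 0 < Set.ncard {j' : Fin n | f (Sum.inr j') = f (Sum.inr j)} :=
        (Set.ncard_pos (Set.toFinite _)).mpr ⟨j, rfl⟩
      rw [hcardB] at hmem
      rcases hshape (f (Sum.inr j)).val (f (Sum.inr j)).isLt with h | h | ⟨h1, h2⟩ | ⟨h1, h2⟩ <;> omega
  · -- equitable
    intro c₁ c₂
    rw [hsizec, hsizec]
    have h1 := hsize c₁.val c₁.isLt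
    have h2 := hsize c₂.val c₂.isLt
    omega

lemma kmn_regimeA (m n t K r : ℕ) (ht : 1 ≤ t) (hK : K ≤ 2) (hr : r < t)
    (hN : m + n = K * t + r) :
    HasEquitableTreeColoring2 (completeBipartiteGraph (Fin m) (Fin n)) t := by
  interval_cases K
  · apply kmn_master m n t ht (fun c => 0 * c + min c r) ?_ ?_ ?_ 0 ?_ ?_
    · intro a b h; simp only; omega
    · omega
    · omega
    · intro c hc; omega
    · intro c hc; omega
  · apply kmn_master m n t ht (fun c => 1 * c + min c r) ?_ ?_ ?_ 1 ?_ ?_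
    · intro a b h; simp only; omega
    · omega
    · omega
    · intro c hc; omega
    · intro c hc; omega
  · apply kmn_master m n t ht (fun c => 2 * c + min c r) ?_ ?_ ?_ 2 ?_ ?_
    · intro a b h; simp only; omega
    · omega
    · omega
    · intro c hc; omega
    · intro c hc; omega

lemma kmn_regimeB (m n t r x y a e : ℕ) (hr : r + 1 ≤ t) (hN : m + n = 3*t + r)
    (hmx : m = 4*x + 3*y + a) (hx : x ≤ r) (ha : a ≤ 2) (he : e ≤ 1)
    (hae : a = 0 ↔ e = 0) (hy : y + e ≤ t - r) :
    HasEquitableTreeColoring2 (completeBipartiteGraph (Fin m) (Fin n)) t := by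
  apply kmn_master m n t (by omega)
    (fun c => if c ≤ x then 4*c else if c ≤ x + (t-r) then 4*x + 3*(c-x)
      else 4*x + 3*(t-r) + 4*(c - x - (t-r))) ?_ ?_ ?_ 3 ?_ ?_
  · intro a' b' h; simp only; split_ifs <;> omega
  · split_ifs <;> omega
  · split_ifs <;> omega
  · intro c hc; split_ifs <;> omega
  · intro c hc; split_ifs <;> omega

lemma kmn_arith (t r m n : ℕ) (hr : r + 1 ≤ t) (hm : 1 ≤ m) (hn : 1 ≤ n)
    (hN : m + n = 3*t + r) :
    ∃ x y a e, a ≤ 2 ∧ e ≤ 1 ∧ (a = 0 ↔ e = 0) ∧ m = 4*x + 3*y + a ∧ x ≤ r ∧ y + e ≤ t - r := by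
  rcases le_or_gt (4*r+2) m with h | h
  · rcases Nat.eq_zero_or_pos ((m - r) % 3) with h0 | h0
    · exact ⟨r, (m - 4*r)/3, 0, 0, by omega, by omega, by omega, by omega, le_rfl, by omega⟩
    · exact ⟨r, (m - (m - r) % 3 - 4*r)/3, (m - r) % 3, 1, by omega, by omega, by omega,
        by omega, le_rfl, by omega⟩
  · have h4 : m % 4 = 0 ∨ m % 4 = 1 ∨ m % 4 = 2 ∨ m % 4 = 3 := by omega
    rcases h4 with h4 | h4 | h4 | h4
    · exact ⟨m/4, 0, 0, 0, by omega, by omega, by omega, by omega, by omega, by omega⟩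
    · exact ⟨m/4, 0, 1, 1, by omega, by omega, by omega, by omega, by omega, by omega⟩
    · exact ⟨m/4, 0, 2, 1, by omega, by omega, by omega, by omega, by omega, by omega⟩
    · exact ⟨m/4, 1, 0, 0, by omega, by omega, by omega, by omega, by omega, by omega⟩


theorem statement3 (m n b c : ℕ) (hm : 0 < m) (hn : 0 < n) (hc : c ≤ 3)
    (hsum : m + n = 4 * b + c) :
    ∀ t : ℕ, b + 1 ≤ t →
      HasEquitableTreeColoring2 (completeBipartiteGraph (Fin m) (Fin n)) t := by
  intro t ht
  have ht1 : 1 ≤ t := by omega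
  rcases lt_or_ge (m + n) (3 * t) with h3 | h3
  · have hK : (m + n) / t ≤ 2 := by
      have := Nat.div_lt_iff_lt_mul (show 0 < t by omega) |>.mpr
        (show m + n < 3 * t by omega)
      omega
    exact kmn_regimeA m n t ((m+n)/t) ((m+n)%t) ht1 hK (Nat.mod_lt _ (by omega))
      (by rw [mul_comm]; exact (Nat.div_add_mod (m+n) t).symm)
  · have hub : m + n ≤ 4 * t - 1 := by omega
    obtain ⟨x, y, a, e, ha, he, hae, hmx, hx, hy⟩ :=
      kmn_arith t (m + n - 3*t) m n (by omega) hm hn (by omega)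
    exact kmn_regimeB m n t (m + n - 3*t) x y a e (by omega) (by omega) hmx hx ha he hae hy
end
end

section
/- Let l ≤ m ≤ n be positive integers with l + m + n = 4b + c, where b is a positive integer and 0 ≤ c ≤ 2. Then the complete tripartite graph K_{l,m,n} has an equitable (t,2)-tree-coloring for every t ≥ b + 1. -/
open SimpleGraph

noncomputable section

namespace Statement10Aux

/-! ### Positions: we lay out the vertex set as `A = [0,l)`, `C = [l, l+n)`, `B = [l+n, l+n+m)`. -/

def posV (l m n : ℕ) : Fin l ⊕ Fin m ⊕ Fin n → ℕ
  | Sum.inl i => (i : ℕ)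
  | Sum.inr (Sum.inl j) => l + n + (j : ℕ)
  | Sum.inr (Sum.inr i) => l + (i : ℕ)

lemma posV_lt (l m n : ℕ) (v : Fin l ⊕ Fin m ⊕ Fin n) : posV l m n v < l + m + n := by
  rcases v with i | j | i
  · have := i.isLt; simp only [posV]; omega
  · have := j.isLt; simp only [posV]; omega
  · have := i.isLt; simp only [posV]; omega

lemma posV_inj (l m n : ℕ) : Function.Injective (posV l m n) := by
  have key : ∀ v, (fun p => if h : p < l then some (Sum.inl ⟨p, h⟩ : Fin l ⊕ Fin m ⊕ Fin n)
      else if h2 : p - l < n then some (Sum.inr (Sum.inr ⟨p - l, h2⟩))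
      else if h3 : p - l - n < m then some (Sum.inr (Sum.inl ⟨p - l - n, h3⟩)) else none)
      (posV l m n v) = some v := by
    rintro (i | j | i)
    · rw [posV]; beta_reduce
      rw [dif_pos i.isLt]
    · have hj := j.isLt
      rw [posV]; beta_reduce
      rw [dif_neg (by omega), dif_neg (by omega), dif_pos (by omega)]
      simp only [Option.some.injEq, Sum.inr.injEq, Sum.inl.injEq, Fin.ext_iff]
      omega
    · have hi := i.isLt
      rw [posV]; beta_reduce
      rw [dif_neg (by omega), dif_pos (by omega)]
      simp only [Option.some.injEq, Sum.inr.injEq, Fin.ext_iff]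
      omega
  intro a b h
  have ha := key a
  rw [h, key b] at ha
  exact (Option.some_injective _ ha).symm

lemma mem_range_posV (l m n p : ℕ) (hp : p < l + m + n) : p ∈ Set.range (posV l m n) := by
  rcases Nat.lt_or_ge p l with h | h
  · exact ⟨Sum.inl ⟨p, h⟩, rfl⟩
  · rcases Nat.lt_or_ge p (l + n) with h2 | h2
    · refine ⟨Sum.inr (Sum.inr ⟨p - l, by omega⟩), ?_⟩
      simp only [posV]; omega
    · refine ⟨Sum.inr (Sum.inl ⟨p - l - n, by omega⟩), ?_⟩
      simp only [posV]; omega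

/-- The part (as a natural number code `0`, `1`, `2`) of a position. -/
def pOf (l n p : ℕ) : ℕ := if p < l then 0 else if p < l + n then 2 else 1

lemma pOf_le (l n p : ℕ) : pOf l n p ≤ 2 := by
  unfold pOf; split_ifs <;> omega

lemma pOf_eq_zero {l n p : ℕ} (h : pOf l n p = 0) : p < l := by
  unfold pOf at h
  split_ifs at h <;> omega

lemma pOf_eq_one {l n p : ℕ} (h : pOf l n p = 1) : l + n ≤ p := by
  unfold pOf at h; split_ifs at h with h1 h2 <;> omega

lemma pOf_congr {l n p q : ℕ}
    (h : (p < l ∧ q < l) ∨ (l ≤ p ∧ p < l + n ∧ l ≤ q ∧ q < l + n) ∨ (l + n ≤ p ∧ l + n ≤ q)) :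
    pOf l n p = pOf l n q := by
  unfold pOf; split_ifs <;> omega

lemma triPart_val (l m n : ℕ) (v : Fin l ⊕ Fin m ⊕ Fin n) :
    ((triPart v : Fin 3) : ℕ) = pOf l n (posV l m n v) := by
  rcases v with i | j | i
  · have := i.isLt
    rw [posV]; simp only [triPart, pOf]
    rw [if_pos (by omega)]
    rfl
  · have := j.isLt
    rw [posV]; simp only [triPart, pOf]
    rw [if_neg (by omega), if_neg (by omega)]
    rfl
  · have := i.isLt
    rw [posV]; simp only [triPart, pOf]
    rw [if_neg (by omega), if_pos (by omega)]
    rfl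

lemma adj_iff (l m n : ℕ) (u w : Fin l ⊕ Fin m ⊕ Fin n) :
    (completeTripartiteGraph l m n).Adj u w ↔
      pOf l n (posV l m n u) ≠ pOf l n (posV l m n w) := by
  have h : (completeTripartiteGraph l m n).Adj u w ↔ triPart u ≠ triPart w := Iff.rfl
  rw [h, Ne, ← Fin.val_eq_val, triPart_val, triPart_val]

/-! ### Small acyclicity lemmas -/

lemma isAcyclic_of_no_adj {W : Type*} {G : SimpleGraph W} (h : ∀ a b : W, ¬ G.Adj a b) :
    G.IsAcyclic := by
  intro v c hc
  exact h _ _ (c.adj_getVert_succ (i := 0) (by have := hc.three_le_length; omega))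

lemma isAcyclic_small {W : Type*} [Finite W] {G : SimpleGraph W} (hW : Nat.card W ≤ 3)
    (htri : ∀ a b c : W, G.Adj a b → G.Adj b c → G.Adj a c → False) : G.IsAcyclic := by
  intro v c hc
  letI hft : Fintype W := Fintype.ofFinite W
  have h3 := hc.three_le_length
  have hnd : c.support.tail.Nodup := hc.support_nodup
  have h1 := hnd.length_le_card
  have h2 := c.length_support
  have h3' := List.length_tail (l := c.support)
  rw [Nat.card_eq_fintype_card] at hW
  have hle : c.length = 3 := by omega
  have e3 : c.getVert 3 = v := by
    have h := c.getVert_length; rwa [hle] at h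
  have a0 := c.adj_getVert_succ (i := 0) (by omega)
  have a1 := c.adj_getVert_succ (i := 1) (by omega)
  have a2 := c.adj_getVert_succ (i := 2) (by omega)
  rw [c.getVert_zero] at a0
  rw [e3] at a2
  exact htri v (c.getVert 1) (c.getVert 2) a0 a1 a2.symm

/-! ### The interval coloring -/

def colorOf : List ℕ → ℕ → ℕ
  | [], _ => 0
  | a :: L, p => if p < a then 0 else colorOf L (p - a) + 1

lemma colorOf_lt_length : ∀ (L : List ℕ) (p : ℕ), p < L.sum → colorOf L p < L.length := by
  intro L
  induction L with
  | nil => intro p hp; simp at hp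
  | cons a L ih =>
    intro p hp
    simp only [List.sum_cons] at hp
    simp only [colorOf, List.length_cons]
    split
    · omega
    · next h =>
      have hih := ih (p - a) (by omega)
      omega

lemma colorOf_eq_iff : ∀ (L : List ℕ) (p i : ℕ), p < L.sum →
    (colorOf L p = i ↔ (L.take i).sum ≤ p ∧ p < (L.take (i + 1)).sum) := by
  intro L
  induction L with
  | nil => intro p i hp; simp at hp
  | cons a L ih =>
    intro p i hp
    simp only [List.sum_cons] at hp
    cases i with
    | zero =>
      simp only [colorOf, List.take_zero, List.sum_nil, List.take_succ_cons, List.sum_cons,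
        Nat.zero_le, true_and]
      split <;> omega
    | succ j =>
      simp only [colorOf, List.take_succ_cons, List.sum_cons]
      split
      · next h => omega
      · next h =>
        rw [show (colorOf L (p - a) + 1 = j + 1) ↔ (colorOf L (p - a) = j) by omega]
        rw [ih (p - a) j (by omega)]
        constructor
        · rintro ⟨h1, h2⟩; exact ⟨by omega, by omega⟩
        · rintro ⟨h1, h2⟩; exact ⟨by omega, by omega⟩

/-! ### The master construction lemma -/

lemma master (l m n t : ℕ) (hn : 2 ≤ n) (L : List ℕ)
    (hlen : L.length = t) (hsum : L.sum = l + m + n)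
    (hk : ∃ k, ∀ x ∈ L, x = k ∨ x = k + 1)
    (hbig : ∀ i (hi : i < L.length), 3 < L[i] →
      ((L.take i).sum + L[i] ≤ l ∨ (l ≤ (L.take i).sum ∧ (L.take i).sum + L[i] ≤ l + n) ∨
        l + n ≤ (L.take i).sum)) :
    HasEquitableTreeColoring2 (completeTripartiteGraph l m n) t := by
  classical
  have hpos : ∀ v, posV l m n v < L.sum := by
    intro v; rw [hsum]; exact posV_lt l m n v
  set f : (Fin l ⊕ Fin m ⊕ Fin n) → Fin t :=
    fun v => ⟨colorOf L (posV l m n v), hlen ▸ colorOf_lt_length L _ (hpos v)⟩ with hfdef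
  have hf : ∀ v (c : Fin t), f v = c ↔
      (L.take c.1).sum ≤ posV l m n v ∧ posV l m n v < (L.take (c.1 + 1)).sum := by
    intro v c
    rw [Fin.ext_iff]
    exact colorOf_eq_iff L _ c.1 (hpos v)
  have hclt : ∀ c : Fin t, c.1 < L.length := fun c => by rw [hlen]; exact c.2
  have hpre : ∀ c : Fin t, f ⁻¹' {c} =
      posV l m n ⁻¹' (Set.Ico ((L.take c.1).sum) ((L.take (c.1 + 1)).sum)) := by
    intro c; ext v
    simp only [Set.mem_preimage, Set.mem_singleton_iff, Set.mem_Ico, hf v c]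
  have hcard : ∀ c : Fin t, (f ⁻¹' {c}).ncard = L[c.1]'(hclt c) := by
    intro c
    rw [hpre c]
    have hEle : (L.take (c.1 + 1)).sum ≤ L.sum := by
      conv_rhs => rw [← List.take_append_drop (c.1 + 1) L]
      rw [List.sum_append]
      exact Nat.le_add_right _ _
    have hsub : Set.Ico ((L.take c.1).sum) ((L.take (c.1 + 1)).sum) ⊆
        Set.range (posV l m n) := by
      intro p hp
      obtain ⟨_, hp2⟩ := hp
      exact mem_range_posV l m n p (by rw [← hsum]; omega)
    rw [← Set.ncard_image_of_injective _ (posV_inj l m n),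
      Set.image_preimage_eq_of_subset hsub,
      show Set.Ico ((L.take c.1).sum) ((L.take (c.1 + 1)).sum) =
        ↑(Finset.Ico ((L.take c.1).sum) ((L.take (c.1 + 1)).sum)) from (Finset.coe_Ico _ _).symm,
      Set.ncard_coe_finset, Nat.card_Ico, List.sum_take_succ L c.1 (hclt c)]
    omega
  have hmem : ∀ v (c : Fin t), v ∈ f ⁻¹' {c} →
      (L.take c.1).sum ≤ posV l m n v ∧ posV l m n v < (L.take (c.1 + 1)).sum := by
    intro v c hv
    rw [hpre c] at hv
    exact hv
  -- classes with a big block lie in a single part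
  have hparts : ∀ c : Fin t, 3 < L[c.1]'(hclt c) →
      ∀ v ∈ f ⁻¹' {c}, ∀ w ∈ f ⁻¹' {c},
        pOf l n (posV l m n v) = pOf l n (posV l m n w) := by
    intro c hc v hv w hw
    obtain ⟨hv1, hv2⟩ := hmem v c hv
    obtain ⟨hw1, hw2⟩ := hmem w c hw
    have hstep := List.sum_take_succ L c.1 (hclt c)
    rcases hbig c.1 (hclt c) hc with h | ⟨h1, h2⟩ | h
    · exact pOf_congr (Or.inl ⟨by omega, by omega⟩)
    · exact pOf_congr (Or.inr (Or.inl ⟨by omega, by omega, by omega, by omega⟩))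
    · exact pOf_congr (Or.inr (Or.inr ⟨by omega, by omega⟩))
  -- small classes are triangle-free
  have htri : ∀ c : Fin t, L[c.1]'(hclt c) ≤ 3 →
      ∀ a ∈ f ⁻¹' {c}, ∀ b ∈ f ⁻¹' {c}, ∀ d ∈ f ⁻¹' {c},
        (completeTripartiteGraph l m n).Adj a b →
        (completeTripartiteGraph l m n).Adj b d →
        (completeTripartiteGraph l m n).Adj a d → False := by
    intro c hc a ha b hb d hd hab hbd had
    obtain ⟨ha1, ha2⟩ := hmem a c ha
    obtain ⟨hb1, hb2⟩ := hmem b c hb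
    obtain ⟨hd1, hd2⟩ := hmem d c hd
    rw [adj_iff] at hab hbd had
    have hstep := List.sum_take_succ L c.1 (hclt c)
    have hla := pOf_le l n (posV l m n a)
    have hlb := pOf_le l n (posV l m n b)
    have hld := pOf_le l n (posV l m n d)
    have ia : pOf l n (posV l m n a) = 0 → posV l m n a < l := fun h => pOf_eq_zero h
    have ib : pOf l n (posV l m n b) = 0 → posV l m n b < l := fun h => pOf_eq_zero h
    have id' : pOf l n (posV l m n d) = 0 → posV l m n d < l := fun h => pOf_eq_zero h
    have ja : pOf l n (posV l m n a) = 1 → l + n ≤ posV l m n a := fun h => pOf_eq_one h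
    have jb : pOf l n (posV l m n b) = 1 → l + n ≤ posV l m n b := fun h => pOf_eq_one h
    have jd : pOf l n (posV l m n d) = 1 → l + n ≤ posV l m n d := fun h => pOf_eq_one h
    omega
  refine ⟨f, ⟨?_, ?_⟩, ?_⟩
  · -- acyclicity of each class
    intro c
    by_cases hc : 3 < L[c.1]'(hclt c)
    · apply isAcyclic_of_no_adj
      intro a b hab
      have hadj : (completeTripartiteGraph l m n).Adj a.1 b.1 := hab
      rw [adj_iff] at hadj
      exact hadj (hparts c hc a.1 a.2 b.1 b.2)
    · apply isAcyclic_small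
      · rw [Nat.card_coe_set_eq, hcard c]; omega
      · intro a b d hab hbd had
        exact htri c (by omega) a.1 a.2 b.1 b.2 d.1 d.2 hab hbd had
  · -- degree condition
    intro v
    by_cases hc : 3 < L[(f v).1]'(hclt (f v))
    · have hempty : {w | (completeTripartiteGraph l m n).Adj v w ∧ f w = f v} = ∅ := by
        ext w
        simp only [Set.mem_setOf_eq, Set.mem_empty_iff_false, iff_false, not_and]
        intro hadj hfw
        rw [adj_iff] at hadj
        exact hadj (hparts (f v) hc v rfl w hfw)
      rw [hempty]
      simp
    · have hsub : {w | (completeTripartiteGraph l m n).Adj v w ∧ f w = f v} ⊆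
          (f ⁻¹' {f v}) \ {v} := by
        intro w hw
        refine ⟨hw.2, ?_⟩
        intro hwv
        rw [Set.mem_singleton_iff] at hwv
        subst hwv
        exact (completeTripartiteGraph l m n).irrefl hw.1
      have h1 : {w | (completeTripartiteGraph l m n).Adj v w ∧ f w = f v}.ncard ≤
          ((f ⁻¹' {f v}) \ {v}).ncard := Set.ncard_le_ncard hsub (Set.toFinite _)
      have h2 : ((f ⁻¹' {f v}) \ {v}).ncard = (f ⁻¹' {f v}).ncard - 1 :=
        Set.ncard_diff_singleton_of_mem rfl
      have h3 := hcard (f v)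
      omega
  · -- equitable
    intro c1 c2
    obtain ⟨k, hkk⟩ := hk
    have h1 := hcard c1
    have h2 := hcard c2
    have e1 := hkk _ (List.getElem_mem (hclt c1))
    have e2 := hkk _ (List.getElem_mem (hclt c2))
    omega

/-! ### Constructing the list of block sizes -/

lemma five_take_sum (a1 b1 a2 b2 a3 i : ℕ) :
    ((List.replicate a1 4 ++ List.replicate b1 3 ++ List.replicate a2 4 ++
        List.replicate b2 3 ++ List.replicate a3 4).take i).sum
      = 4 * min i a1 + 3 * min (i - a1) b1 + 4 * min (i - a1 - b1) a2
        + 3 * min (i - a1 - b1 - a2) b2 + 4 * min (i - a1 - b1 - a2 - b2) a3 := by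
  simp only [List.take_append, List.take_replicate, List.sum_append,
    List.sum_replicate, List.length_replicate, List.length_append, smul_eq_mul]
  omega

lemma small_case (l n k s r : ℕ) (hk : k ≤ 2) :
    ∃ L : List ℕ, L.length = s + r ∧ L.sum = s * (k + 1) + r * k ∧
      (∀ x ∈ L, x = k ∨ x = k + 1) ∧
      ∀ i (hi : i < L.length), 3 < L[i] →
        ((L.take i).sum + L[i] ≤ l ∨ (l ≤ (L.take i).sum ∧ (L.take i).sum + L[i] ≤ l + n) ∨
          l + n ≤ (L.take i).sum) := by
  refine ⟨List.replicate s (k + 1) ++ List.replicate r k, by simp, ?_, ?_, ?_⟩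
  · simp only [List.sum_append, List.sum_replicate, smul_eq_mul]
  · intro x hx
    rcases List.mem_append.mp hx with h | h
    · exact Or.inr (List.eq_of_mem_replicate h)
    · exact Or.inl (List.eq_of_mem_replicate h)
  · intro i hi hgt
    have hm := List.getElem_mem hi
    rcases List.mem_append.mp hm with h | h
    · have := List.eq_of_mem_replicate h; omega
    · have := List.eq_of_mem_replicate h; omega

set_option maxHeartbeats 2000000 in
lemma exists_list (l m n t : ℕ) (hn : 2 ≤ n) (ht : 0 < t) (hN : l + m + n + 2 ≤ 4 * t) :
    ∃ L : List ℕ, L.length = t ∧ L.sum = l + m + n ∧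
      (∃ k, ∀ x ∈ L, x = k ∨ x = k + 1) ∧
      ∀ i (hi : i < L.length), 3 < L[i] →
        ((L.take i).sum + L[i] ≤ l ∨ (l ≤ (L.take i).sum ∧ (L.take i).sum + L[i] ≤ l + n) ∨
          l + n ≤ (L.take i).sum) := by
  obtain ⟨k, s, hdm, hst, hk3⟩ : ∃ k s, t * k + s = l + m + n ∧ s < t ∧ k ≤ 3 := by
    refine ⟨(l + m + n) / t, (l + m + n) % t, ?_, Nat.mod_lt _ ht, ?_⟩
    · exact Nat.div_add_mod _ _
    · have : (l + m + n) / t < 4 := (Nat.div_lt_iff_lt_mul ht).mpr (by omega)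
      omega
  interval_cases k
  · obtain ⟨L, h1, h2, h3, h4⟩ := small_case l n 0 s (t - s) (by omega)
    exact ⟨L, by omega, by omega, ⟨0, h3⟩, h4⟩
  · obtain ⟨L, h1, h2, h3, h4⟩ := small_case l n 1 s (t - s) (by omega)
    exact ⟨L, by omega, by omega, ⟨1, h3⟩, h4⟩
  · obtain ⟨L, h1, h2, h3, h4⟩ := small_case l n 2 s (t - s) (by omega)
    exact ⟨L, by omega, by omega, ⟨2, h3⟩, h4⟩
  · -- k = 3 : blocks of sizes 3 and 4
    obtain ⟨a1, ha1⟩ : ∃ x, x = min s (l / 4) := ⟨_, rfl⟩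
    obtain ⟨b1, hb1⟩ : ∃ x, x = (l - 4 * a1 + 2) / 3 := ⟨_, rfl⟩
    obtain ⟨a2, ha2⟩ : ∃ x, x = min (s - a1) ((l + n - (4 * a1 + 3 * b1)) / 4) := ⟨_, rfl⟩
    obtain ⟨b2, hb2⟩ : ∃ x, x = t - s - b1 := ⟨_, rfl⟩
    obtain ⟨a3, ha3⟩ : ∃ x, x = s - a1 - a2 := ⟨_, rfl⟩
    obtain ⟨L, hL⟩ : ∃ L : List ℕ, L = List.replicate a1 4 ++ List.replicate b1 3 ++
        List.replicate a2 4 ++ List.replicate b2 3 ++ List.replicate a3 4 := ⟨_, rfl⟩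
    have hlen : L.length = a1 + b1 + a2 + b2 + a3 := by
      rw [hL]
      simp only [List.length_append, List.length_replicate]
    have hsum : L.sum = 4 * a1 + 3 * b1 + 4 * a2 + 3 * b2 + 4 * a3 := by
      rw [hL]
      simp only [List.sum_append, List.sum_replicate, smul_eq_mul]
      ring
    have hts : s + 2 ≤ t := by omega
    have f1 : 4 * a1 ≤ l := by clear hb1 ha2; omega
    have f2 : a1 ≤ s := by clear hb1 ha2; omega
    have f10 : a1 < s → b1 ≤ 1 := by clear ha2; omega
    have f4 : l ≤ 4 * a1 + 3 * b1 := by clear ha2; omega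
    have f5 : 4 * a1 + 3 * b1 ≤ l + 2 := by clear ha2; omega
    have f9 : b1 ≤ t - s := by clear ha2; omega
    clear ha1 hb1
    have f6 : a1 + a2 ≤ s := by omega
    have f7 : 4 * a1 + 3 * b1 + 4 * a2 ≤ l + n := by omega
    have f8 : a2 = s - a1 ∨ l + n ≤ 4 * a1 + 3 * b1 + 4 * a2 + 3 := by omega
    clear ha2
    refine ⟨L, ?_, ?_, ⟨3, ?_⟩, ?_⟩
    · rw [hlen]; omega
    · rw [hsum]; omega
    · intro x hx
      rw [hL] at hx
      simp only [List.mem_append, List.mem_replicate] at hx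
      omega
    · intro i hi hgt
      have hS := five_take_sum a1 b1 a2 b2 a3 i
      have hS' := five_take_sum a1 b1 a2 b2 a3 (i + 1)
      rw [← hL] at hS hS'
      have hstep := List.sum_take_succ L i hi
      rw [hlen] at hi
      rcases Nat.lt_or_ge i a1 with hc1 | hc1
      · have e1 : (L.take i).sum = 4 * i := by clear * - hS hc1; rw [hS]; omega
        have e2 : (L.take (i + 1)).sum = 4 * (i + 1) := by clear * - hS' hc1; rw [hS']; omega
        left
        clear * - e1 e2 hstep f1 hc1
        omega
      rcases Nat.lt_or_ge i (a1 + b1) with hc2 | hc2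
      · have e1 : (L.take i).sum = 4 * a1 + 3 * (i - a1) := by
          clear * - hS hc1 hc2; rw [hS]; omega
        have e2 : (L.take (i + 1)).sum = 4 * a1 + 3 * (i + 1 - a1) := by
          clear * - hS' hc1 hc2; rw [hS']; omega
        clear * - e1 e2 hstep hgt hc1 hc2
        omega
      rcases Nat.lt_or_ge i (a1 + b1 + a2) with hc3 | hc3
      · have e1 : (L.take i).sum = 4 * a1 + 3 * b1 + 4 * (i - a1 - b1) := by
          clear * - hS hc2 hc3; rw [hS]; omega
        have e2 : (L.take (i + 1)).sum = 4 * a1 + 3 * b1 + 4 * (i + 1 - a1 - b1) := by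
          clear * - hS' hc2 hc3; rw [hS']; omega
        right; left
        clear * - e1 e2 hstep f4 f7 hc2 hc3
        omega
      rcases Nat.lt_or_ge i (a1 + b1 + a2 + b2) with hc4 | hc4
      · have e1 : (L.take i).sum = 4 * a1 + 3 * b1 + 4 * a2 + 3 * (i - a1 - b1 - a2) := by
          clear * - hS hc3 hc4; rw [hS]; omega
        have e2 : (L.take (i + 1)).sum =
            4 * a1 + 3 * b1 + 4 * a2 + 3 * (i + 1 - a1 - b1 - a2) := by
          clear * - hS' hc3 hc4; rw [hS']; omega
        clear * - e1 e2 hstep hgt hc3 hc4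
        omega
      · have e1 : (L.take i).sum =
            4 * a1 + 3 * b1 + 4 * a2 + 3 * b2 + 4 * (i - a1 - b1 - a2 - b2) := by
          clear * - hS hc4 hi; rw [hS]; omega
        right; right
        clear * - e1 f6 f8 f10 ha3 hb2 hts hi hc4
        omega

end Statement10Aux

theorem statement10 (l m n b c : ℕ) (hl : 0 < l) (hlm : l ≤ m) (hmn : m ≤ n)
    (hb : 0 < b) (hc : c ≤ 2) (hsum : l + m + n = 4 * b + c) :
    ∀ t : ℕ, b + 1 ≤ t →
      HasEquitableTreeColoring2 (completeTripartiteGraph l m n) t := by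
  intro t ht
  have hn : 2 ≤ n := by omega
  obtain ⟨L, h1, h2, h3, h4⟩ := Statement10Aux.exists_list l m n t hn (by omega) (by omega)
  exact Statement10Aux.master l m n t hn L h1 h2 h3 h4
end
end

section
/- Let l ≤ m ≤ n be positive integers with l + m + n = 4b + 3, where b is a positive integer. Then the complete tripartite graph K_{l,m,n} has an equitable (t,2)-tree-coloring for every t ≥ b + 2. -/
open SimpleGraph

noncomputable section

namespace EqTree

def vpos (l m n : ℕ) : Fin l ⊕ Fin m ⊕ Fin n → ℕ := fun v =>
  match v with
  | .inl i => i.val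
  | .inr (.inl j) => l + n + j.val
  | .inr (.inr k) => l + k.val

def band (l n p : ℕ) : ℕ := if p < l then 0 else if p < l + n then 2 else 1

lemma vpos_lt {l m n : ℕ} (v : Fin l ⊕ Fin m ⊕ Fin n) : vpos l m n v < l + m + n := by
  rcases v with ⟨i, hi⟩ | ⟨j, hj⟩ | ⟨k, hk⟩ <;> simp [vpos] <;> omega

lemma vpos_inj {l m n : ℕ} : Function.Injective (vpos l m n) := by
  intro v w h
  rcases v with ⟨i, hi⟩ | ⟨j, hj⟩ | ⟨k, hk⟩ <;>
    rcases w with ⟨i', hi'⟩ | ⟨j', hj'⟩ | ⟨k', hk'⟩ <;>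
    simp only [vpos] at h <;>
    first
      | (simp only [Sum.inl.injEq, Sum.inr.injEq, Fin.mk.injEq]; omega)
      | exact absurd h (by omega)

lemma vpos_surj {l m n : ℕ} (p : ℕ) (hp : p < l + m + n) :
    ∃ v : Fin l ⊕ Fin m ⊕ Fin n, vpos l m n v = p := by
  by_cases h1 : p < l
  · exact ⟨.inl ⟨p, h1⟩, rfl⟩
  by_cases h2 : p < l + n
  · exact ⟨.inr (.inr ⟨p - l, by omega⟩), by simp [vpos]; omega⟩
  · exact ⟨.inr (.inl ⟨p - l - n, by omega⟩), by simp [vpos]; omega⟩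

lemma band_vpos {l m n : ℕ} (v : Fin l ⊕ Fin m ⊕ Fin n) :
    (triPart v).val = band l n (vpos l m n v) := by
  rcases v with ⟨i, hi⟩ | ⟨j, hj⟩ | ⟨k, hk⟩ <;>
    simp only [triPart, vpos, band] <;> split_ifs <;> simp [*] <;> omega

lemma adj_iff {l m n : ℕ} (v w : Fin l ⊕ Fin m ⊕ Fin n) :
    (completeTripartiteGraph l m n).Adj v w ↔
      band l n (vpos l m n v) ≠ band l n (vpos l m n w) := by
  show triPart v ≠ triPart w ↔ _
  rw [← band_vpos, ← band_vpos]
  constructor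
  · intro h h'; exact h (Fin.ext h')
  · intro h h'; exact h (by rw [h'])

lemma band_spec (l n p : ℕ) :
    (p < l ∧ band l n p = 0) ∨ (l ≤ p ∧ p < l + n ∧ band l n p = 2) ∨
      (l + n ≤ p ∧ band l n p = 1) := by
  unfold band; split_ifs <;> omega

end EqTree

namespace EqTree

lemma construct (l m n t : ℕ) (ht : 0 < t) (hn3 : 3 ≤ n) (st : ℕ → ℕ)
    (h0 : st 0 = 0) (hT : st t = l + m + n)
    (hstep : ∀ c, c < t → st c ≤ st (c + 1) ∧ st (c + 1) ≤ st c + 4)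
    (heq : ∀ c₁ c₂, c₁ < t → c₂ < t →
      st (c₁ + 1) - st c₁ ≤ (st (c₂ + 1) - st c₂) + 1)
    (h4 : ∀ c, c < t → st c + 4 ≤ st (c + 1) →
      st c + 4 ≤ l ∨ (l ≤ st c ∧ st c + 4 ≤ l + n) ∨ l + n ≤ st c) :
    HasEquitableTreeColoring2 (completeTripartiteGraph l m n) t := by
  classical
  -- monotonicity of st on [0, t]
  have hmono : ∀ j, j ≤ t → ∀ i, i ≤ j → st i ≤ st j := by
    intro j hj
    induction j with
    | zero => intro i hi; have h' : i = 0 := Nat.le_zero.mp hi; rw [h']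
    | succ k ih =>
      intro i hi
      rcases Nat.lt_succ_iff_lt_or_eq.mp (Nat.lt_succ_of_le hi) with h | h
      · exact le_trans (ih (by omega) i (by omega)) (hstep k (by omega)).1
      · subst h; exact le_rfl
  have hexists : ∀ p, p < l + m + n → ∃ c, p < st (c + 1) := by
    intro p hp
    refine ⟨t - 1, ?_⟩
    have : t - 1 + 1 = t := by omega
    rw [this, hT]; exact hp
  -- the color of a position
  let col : ℕ → ℕ := fun p => if hp : p < l + m + n then Nat.find (hexists p hp) else 0
  have hcol_spec : ∀ p (hp : p < l + m + n) (c : ℕ), c < t →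
      (col p = c ↔ st c ≤ p ∧ p < st (c + 1)) := by
    intro p hp c hc
    have hfs : p < st (col p + 1) := by
      simp only [col, dif_pos hp]; exact Nat.find_spec (hexists p hp)
    have hlow : st (col p) ≤ p := by
      simp only [col, dif_pos hp]
      rcases Nat.eq_zero_or_pos (Nat.find (hexists p hp)) with h | h
      · rw [h, h0]; exact Nat.zero_le _
      · have := Nat.find_min (hexists p hp) (show Nat.find (hexists p hp) - 1 <
          Nat.find (hexists p hp) by omega)
        have he : Nat.find (hexists p hp) - 1 + 1 = Nat.find (hexists p hp) := by omega
        rw [he] at this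
        omega
    constructor
    · rintro rfl; exact ⟨hlow, hfs⟩
    · rintro ⟨h1, h2⟩
      have hle : col p ≤ c := by
        simp only [col, dif_pos hp]; exact Nat.find_le h2
      rcases Nat.lt_or_ge (col p) c with h | h
      · exfalso
        have : st (col p + 1) ≤ st c := hmono c (by omega) _ (by omega)
        omega
      · omega
  have hcol_lt : ∀ p, p < l + m + n → col p < t := by
    intro p hp
    have : col p ≤ t - 1 := by
      simp only [col, dif_pos hp]
      apply Nat.find_le
      have : t - 1 + 1 = t := by omega
      rw [this, hT]; exact hp
    omega
  -- the coloring
  let f : Fin l ⊕ Fin m ⊕ Fin n → Fin t := fun v => ⟨col (vpos l m n v), hcol_lt _ (vpos_lt v)⟩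
  have hclass : ∀ (v : Fin l ⊕ Fin m ⊕ Fin n) (c : Fin t), f v = c ↔
      st c.val ≤ vpos l m n v ∧ vpos l m n v < st (c.val + 1) := by
    intro v c
    rw [← hcol_spec _ (vpos_lt v) c.val c.isLt]
    constructor
    · intro h; exact congrArg Fin.val h
    · intro h; exact Fin.ext h
  have himg : ∀ c : Fin t, vpos l m n '' (f ⁻¹' {c}) =
      Set.Ico (st c.val) (st (c.val + 1)) := by
    intro c
    ext p
    constructor
    · rintro ⟨v, hv, rfl⟩
      simp only [Set.mem_preimage, Set.mem_singleton_iff] at hv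
      exact (hclass v c).mp hv
    · rintro ⟨h1, h2⟩
      have hpN : p < l + m + n := lt_of_lt_of_le h2 (by rw [← hT]; exact hmono t le_rfl _ c.isLt)
      obtain ⟨v, rfl⟩ := vpos_surj p hpN
      refine ⟨v, ?_, rfl⟩
      simp only [Set.mem_preimage, Set.mem_singleton_iff]
      exact (hclass v c).mpr ⟨h1, h2⟩
  have hfib : ∀ c : Fin t, (f ⁻¹' {c}).ncard = st (c.val + 1) - st c.val := by
    intro c
    rw [← Set.ncard_image_of_injective _ vpos_inj, himg c, ← Finset.coe_Ico,
      Set.ncard_coe_finset, Nat.card_Ico]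
  -- no adjacency within a size-4 class
  have hnoadj : ∀ c : Fin t, st c.val + 4 ≤ st (c.val + 1) → ∀ v w : Fin l ⊕ Fin m ⊕ Fin n,
      v ∈ f ⁻¹' {c} → w ∈ f ⁻¹' {c} → ¬ (completeTripartiteGraph l m n).Adj v w := by
    intro c hc v w hv hw hadj
    rw [Set.mem_preimage, Set.mem_singleton_iff] at hv hw
    have h1 := (hclass v c).mp hv
    have h2 := (hclass w c).mp hw
    have hw4 := h4 c.val c.isLt hc
    have hs := (hstep c.val c.isLt).2
    have hb1 := band_spec l n (vpos l m n v)
    have hb2 := band_spec l n (vpos l m n w)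
    have := (adj_iff v w).mp hadj
    omega
  -- no triangle within a class of size ≤ 3
  have hnotri : ∀ c : Fin t, st (c.val + 1) ≤ st c.val + 3 → ∀ x y z : Fin l ⊕ Fin m ⊕ Fin n,
      x ∈ f ⁻¹' {c} → y ∈ f ⁻¹' {c} → z ∈ f ⁻¹' {c} →
      (completeTripartiteGraph l m n).Adj x y →
      (completeTripartiteGraph l m n).Adj y z →
      (completeTripartiteGraph l m n).Adj z x → False := by
    intro c hc x y z hx hy hz hxy hyz hzx
    rw [Set.mem_preimage, Set.mem_singleton_iff] at hx hy hz
    have h1 := (hclass x c).mp hx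
    have h2 := (hclass y c).mp hy
    have h3 := (hclass z c).mp hz
    have hb1 := band_spec l n (vpos l m n x)
    have hb2 := band_spec l n (vpos l m n y)
    have hb3 := band_spec l n (vpos l m n z)
    have e1 := (adj_iff x y).mp hxy
    have e2 := (adj_iff y z).mp hyz
    have e3 := (adj_iff z x).mp hzx
    omega
  refine ⟨f, ⟨?_, ?_⟩, ?_⟩
  · -- acyclicity
    intro c
    by_cases hc : st c.val + 4 ≤ st (c.val + 1)
    · intro v p hp
      cases p with
      | nil => exact hp.ne_nil rfl
      | cons hadj q =>
        exact hnoadj c hc _ _ (Subtype.coe_prop _) (Subtype.coe_prop _) hadj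
    · push_neg at hc
      have hc3 : st (c.val + 1) ≤ st c.val + 3 := by omega
      intro v p hp
      haveI : Fintype ↥(f ⁻¹' {c}) := (Set.toFinite _).fintype
      have hcard : Fintype.card ↥(f ⁻¹' {c}) ≤ 3 := by
        rw [← Nat.card_eq_fintype_card, Nat.card_coe_set_eq, hfib]
        have := (hstep c.val c.isLt).1
        omega
      have h3 : 3 ≤ p.length := hp.three_le_length
      have hlen : p.length ≤ 3 := by
        have hnd := hp.support_nodup
        have := hnd.length_le_card
        have hsl : p.support.tail.length = p.length := by
          have hls := SimpleGraph.Walk.length_support p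
          rw [List.length_tail, hls]
          omega
        omega
      have hplen : p.length = 3 := le_antisymm hlen h3
      cases p with
      | nil => simp at hplen
      | cons h1 q =>
        cases q with
        | nil => simp at hplen
        | cons h2 q2 =>
          cases q2 with
          | nil => simp at hplen
          | cons h3' q3 =>
            cases q3 with
            | cons h4' q4 =>
              simp only [SimpleGraph.Walk.length_cons] at hplen; omega
            | nil =>
              exact hnotri c hc3 _ _ _ (Subtype.coe_prop _) (Subtype.coe_prop _)
                (Subtype.coe_prop _) h1 h2 h3'
  · -- degree condition
    intro v
    by_cases hc : st (f v).val + 4 ≤ st ((f v).val + 1)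
    · have : {w : Fin l ⊕ Fin m ⊕ Fin n | (completeTripartiteGraph l m n).Adj v w ∧ f w = f v} = ∅ := by
        ext w
        simp only [Set.mem_setOf_eq, Set.mem_empty_iff_false, iff_false, not_and]
        intro hadj hfw
        exact absurd hadj (hnoadj (f v) hc v w rfl hfw)
      rw [this]
      simp
    · push_neg at hc
      have hsub : {w : Fin l ⊕ Fin m ⊕ Fin n | (completeTripartiteGraph l m n).Adj v w ∧ f w = f v} ⊆
          (f ⁻¹' {f v}) \ {v} := by
        rintro w ⟨hadj, hfw⟩
        refine ⟨hfw, ?_⟩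
        intro hw
        simp only [Set.mem_singleton_iff] at hw
        subst hw
        exact (completeTripartiteGraph l m n).loopless.irrefl _ hadj
      have h2 : ((f ⁻¹' {f v}) \ {v}).ncard = (f ⁻¹' {f v}).ncard - 1 :=
        Set.ncard_diff_singleton_of_mem (by simp)
      have h3 := hfib (f v)
      have h5 := (hstep (f v).val (f v).isLt).1
      refine le_trans (Set.ncard_le_ncard hsub (Set.toFinite _)) ?_
      omega
  · -- equitability
    intro c₁ c₂
    rw [hfib c₁, hfib c₂]
    exact heq _ _ c₁.isLt c₂.isLt

end EqTree

set_option maxHeartbeats 1000000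

theorem statement11 (l m n b : ℕ) (hl : 0 < l) (hlm : l ≤ m) (hmn : m ≤ n)
    (hb : 0 < b) (hsum : l + m + n = 4 * b + 3) :
    ∀ t : ℕ, b + 2 ≤ t →
      HasEquitableTreeColoring2 (completeTripartiteGraph l m n) t := by
  intro t ht
  have hn3 : 3 ≤ n := by omega
  have ht0 : 0 < t := by omega
  by_cases hc : l + m + n ≤ 3 * t
  · -- small classes: sizes ≤ 3
    obtain ⟨a, k, hN, hk, ha4⟩ : ∃ a k, l + m + n = t * a + k ∧ k < t ∧
        (a = 0 ∨ a = 1 ∨ a = 2 ∨ a = 3) := by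
      obtain ⟨a, ha⟩ : ∃ a, a = (l + m + n) / t := ⟨_, rfl⟩
      obtain ⟨k, hk'⟩ : ∃ k, k = (l + m + n) % t := ⟨_, rfl⟩
      have hN : l + m + n = t * a + k := by
        rw [ha, hk']; exact (Nat.div_add_mod _ t).symm
      have hkt : k < t := by rw [hk']; exact Nat.mod_lt _ ht0
      have h1 : a ≤ 3 := by
        rw [ha]
        have h2 := Nat.div_le_div_right (c := t) hc
        rwa [Nat.mul_div_cancel _ ht0] at h2
      exact ⟨a, k, hN, hkt, by omega⟩
    refine EqTree.construct l m n t ht0 hn3 (fun c => a * c + min c k) ?_ ?_ ?_ ?_ ?_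
    · show a * 0 + min 0 k = 0
      simp
    · show a * t + min t k = l + m + n
      rcases ha4 with rfl | rfl | rfl | rfl <;> omega
    · intro c hcl
      show a * c + min c k ≤ a * (c + 1) + min (c + 1) k ∧
        a * (c + 1) + min (c + 1) k ≤ a * c + min c k + 4
      rcases ha4 with rfl | rfl | rfl | rfl <;> omega
    · intro c₁ c₂ h1 h2
      show (a * (c₁ + 1) + min (c₁ + 1) k) - (a * c₁ + min c₁ k) ≤
        ((a * (c₂ + 1) + min (c₂ + 1) k) - (a * c₂ + min c₂ k)) + 1
      rcases ha4 with rfl | rfl | rfl | rfl <;> omega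
    · intro c hcl hle
      have hle' : (a * c + min c k) + 4 ≤ a * (c + 1) + min (c + 1) k := hle
      show (a * c + min c k) + 4 ≤ l ∨
        (l ≤ a * c + min c k ∧ (a * c + min c k) + 4 ≤ l + n) ∨ l + n ≤ a * c + min c k
      rcases ha4 with rfl | rfl | rfl | rfl <;> omega
  · -- big classes: sizes 3 and 4
    push_neg at hc
    obtain ⟨r, hr⟩ : ∃ r, r = l + m + n - 3 * t := ⟨_, rfl⟩
    obtain ⟨ql, hql1, hql2⟩ : ∃ ql, 4 * ql ≤ l ∧ l < 4 * ql + 4 :=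
      ⟨l / 4, by omega, by omega⟩
    obtain ⟨qm, hqm1, hqm2⟩ : ∃ qm, 4 * qm ≤ m ∧ m < 4 * qm + 4 :=
      ⟨m / 4, by omega, by omega⟩
    obtain ⟨a1, ha1d⟩ : ∃ a1, a1 = min r ql := ⟨_, rfl⟩
    obtain ⟨a3, ha3d⟩ : ∃ a3, a3 = min (r - a1) qm := ⟨_, rfl⟩
    obtain ⟨a2, ha2d⟩ : ∃ a2, a2 = r - a1 - a3 := ⟨_, rfl⟩
    obtain ⟨c1, x1, hc1, hx1⟩ : ∃ c1 x1, c1 < 3 ∧ 3 * x1 = (l - 4 * a1) + c1 :=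
      ⟨(3 - (l - 4 * a1) % 3) % 3, ((l - 4 * a1) + (3 - (l - 4 * a1) % 3) % 3) / 3,
        by omega, by omega⟩
    have ha1 : 4 * a1 ≤ l := by omega
    have ha3 : 4 * a3 ≤ m := by omega
    have har : a1 + a2 + a3 = l + m + n - 3 * t := by omega
    have hfit : c1 + 4 * a2 ≤ n := by omega
    have hord : a1 + x1 + a2 + a3 ≤ t := by omega
    obtain ⟨st, hst⟩ : ∃ st : ℕ → ℕ, ∀ c, st c = 3 * c + min c a1 +
        (min c (a1 + x1 + a2) - min c (a1 + x1)) + (c - min c (t - a3)) :=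
      ⟨_, fun _ => rfl⟩
    have hA : ∀ c, c ≤ a1 → st c = 4 * c := by
      intro c h; rw [hst]; omega
    have hB : ∀ c, a1 ≤ c → c ≤ a1 + x1 → st c = 3 * c + a1 := by
      intro c h h'; rw [hst]; omega
    have hC : ∀ c, a1 + x1 ≤ c → c ≤ a1 + x1 + a2 →
        st c = 3 * c + a1 + (c - (a1 + x1)) := by
      intro c h h'; rw [hst]; omega
    have hD : ∀ c, a1 + x1 + a2 ≤ c → c ≤ t - a3 → st c = 3 * c + a1 + a2 := by
      intro c h h'; rw [hst]; omega
    have hE : ∀ c, t - a3 ≤ c → c ≤ t →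
        st c = 3 * c + a1 + a2 + (c - (t - a3)) := by
      intro c h h'; rw [hst]; omega
    have hstep' : ∀ c, c < t →
        (st (c + 1) = st c + 3 ∨ st (c + 1) = st c + 4) ∧
        (st (c + 1) = st c + 4 →
          (st c + 4 ≤ l ∨ (l ≤ st c ∧ st c + 4 ≤ l + n) ∨ l + n ≤ st c)) := by
      intro c hcl
      rcases Nat.lt_or_ge c a1 with h | h
      · have e1 := hA c (by omega)
        have e2 := hA (c + 1) (by omega)
        omega
      rcases Nat.lt_or_ge c (a1 + x1) with h2 | h2
      · have e1 := hB c (by omega) (by omega)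
        have e2 := hB (c + 1) (by omega) (by omega)
        omega
      rcases Nat.lt_or_ge c (a1 + x1 + a2) with h3 | h3
      · have e1 := hC c (by omega) (by omega)
        have e2 := hC (c + 1) (by omega) (by omega)
        omega
      rcases Nat.lt_or_ge c (t - a3) with h4 | h4
      · have e1 := hD c (by omega) (by omega)
        have e2 := hD (c + 1) (by omega) (by omega)
        omega
      · have e1 := hE c (by omega) (by omega)
        have e2 := hE (c + 1) (by omega) (by omega)
        omega
    refine EqTree.construct l m n t ht0 hn3 st ?_ ?_ ?_ ?_ ?_
    · have := hA 0 (by omega)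
      omega
    · have := hE t (by omega) (by omega)
      omega
    · intro c hcl
      have := (hstep' c hcl).1
      omega
    · intro c₁ c₂ h1 h2
      have e1 := (hstep' c₁ h1).1
      have e2 := (hstep' c₂ h2).1
      omega
    · intro c hcl hle
      have e1 := (hstep' c hcl).1
      have e2 := (hstep' c hcl).2
      omega
end
end

section
/- Let l ≤ m ≤ n be positive integers with l + m + n = 4b + 3 for a nonnegative integer b. Then K_{l,m,n} has an equitable (b+1,2)-tree-coloring if and only if (l,m,n) satisfies Condition A. -/
open SimpleGraph

noncomputable section

section Helpers
open Finset


lemma star_isAcyclic {V : Type*} [DecidableEq V] (G : SimpleGraph V) (x₀ : V)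
    (h : ∀ v w, G.Adj v w → v = x₀ ∨ w = x₀) : G.IsAcyclic := by
  intro u c hc
  have hx : x₀ ∈ c.support := by
    cases c with
    | nil => exact absurd rfl hc.ne_nil
    | @cons _ v _ hadj p =>
      rcases h _ _ hadj with rfl | rfl
      · exact Walk.start_mem_support _
      · simp [Walk.support_cons]
  have hc' : (c.rotate x₀ hx).IsCycle := hc.rotate hx
  have h3 : 3 ≤ (c.rotate x₀ hx).length := hc'.three_le_length
  generalize hrc : c.rotate x₀ hx = c' at hc' h3
  cases c' with
  | nil => exact absurd rfl hc'.ne_nil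
  | @cons _ a _ h₁ p₁ =>
    cases p₁ with
    | nil => simp at h3
    | @cons _ a₂ _ h₂ p₂ =>
      have ha2 : a₂ = x₀ := by
        rcases h _ _ h₂ with rfl | rfl
        · exact absurd rfl h₁.ne'
        · rfl
      subst ha2
      cases p₂ with
      | nil => simp at h3
      | @cons _ a₃ _ h₃ p₃ =>
        have hnd := hc'.2
        have hmem := p₃.end_mem_support
        simp only [Walk.support_cons, List.tail_cons, List.nodup_cons, List.mem_cons] at hnd
        exact hnd.2.1 hmem

lemma acyclic_of_pseudo_star {V : Type*} [DecidableEq V] (G : SimpleGraph V) (Q : V → Prop)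
    (h1 : ∀ v w, G.Adj v w → Q v ∨ Q w) (h2 : ∀ v w, Q v → Q w → v = w) : G.IsAcyclic := by
  by_cases he : ∃ v w, G.Adj v w
  · obtain ⟨v, w, hvw⟩ := he
    have hQ : ∃ x₀, Q x₀ := by rcases h1 v w hvw with h | h; exacts [⟨v, h⟩, ⟨w, h⟩]
    obtain ⟨x₀, hx₀⟩ := hQ
    exact star_isAcyclic G x₀ fun a c hac =>
      (h1 a c hac).imp (fun h => h2 _ _ h hx₀) (fun h => h2 _ _ h hx₀)
  · intro u c hc
    cases c with
    | nil => exact absurd rfl hc.ne_nil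
    | cons hadj p => exact he ⟨_, _, hadj⟩

lemma not_isAcyclic_of_triangle {V : Type*} {G : SimpleGraph V} {a b c : V}
    (hab : G.Adj a b) (hbc : G.Adj b c) (hca : G.Adj c a) : ¬ G.IsAcyclic := by
  intro h
  have h1 : a ≠ b := hab.ne
  have h2 : b ≠ c := hbc.ne
  have h3 : c ≠ a := hca.ne
  apply h (Walk.cons hab (Walk.cons hbc (Walk.cons hca Walk.nil)))
  rw [Walk.isCycle_def, Walk.isTrail_def]
  refine ⟨?_, by simp, ?_⟩
  · simp [Walk.edges_cons, List.nodup_cons, Sym2.eq_iff]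
    tauto
  · simp [Walk.support_cons, List.nodup_cons]
    tauto

lemma not_isAcyclic_of_square {V : Type*} {G : SimpleGraph V} {a b c d : V}
    (hac : a ≠ c) (hbd : b ≠ d)
    (hab : G.Adj a b) (hbc : G.Adj b c) (hcd : G.Adj c d) (hda : G.Adj d a) : ¬ G.IsAcyclic := by
  intro h
  have h1 : a ≠ b := hab.ne
  have h2 : b ≠ c := hbc.ne
  have h3 : c ≠ d := hcd.ne
  have h4 : d ≠ a := hda.ne
  apply h (Walk.cons hab (Walk.cons hbc (Walk.cons hcd (Walk.cons hda Walk.nil))))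
  rw [Walk.isCycle_def, Walk.isTrail_def]
  refine ⟨?_, by simp, ?_⟩
  · simp [Walk.edges_cons, List.nodup_cons, Sym2.eq_iff]
    tauto
  · simp [Walk.support_cons, List.nodup_cons]
    tauto

private lemma fin3_pigeon {p₀ p₁ a b : Fin 3} (h : p₀ ≠ p₁) (ha0 : a ≠ p₀) (ha1 : a ≠ p₁)
    (hb0 : b ≠ p₀) (hb1 : b ≠ p₁) : a = b := by
  have h1 := p₀.isLt; have h2 := p₁.isLt; have h3 := a.isLt; have h4 := b.isLt
  simp only [Fin.ext_iff, Ne] at *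
  omega

private def gfun (L M N B : ℕ) {l m n : ℕ} : Fin l ⊕ Fin m ⊕ Fin n → ℕ
  | Sum.inl i => if (i : ℕ) < 4*L then (i : ℕ)/4 else B
  | Sum.inr (Sum.inl i) => if (i : ℕ) < 4*M then L + (i : ℕ)/4 else B
  | Sum.inr (Sum.inr i) => if (i : ℕ) < 4*N then L + M + (i : ℕ)/4 else B

private lemma count_eval (K off r cval B : ℕ) (hKB : off + K ≤ B) (hr : r ≤ 3) :
    ((Finset.range (4*K+r)).filter fun i => (if i < 4*K then off + i/4 else B) = cval).card
    = if off ≤ cval ∧ cval < off + K then 4 else if cval = B then r else 0 := by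
  split_ifs with h1 h2
  · have he : ((Finset.range (4*K+r)).filter fun i => (if i < 4*K then off + i/4 else B) = cval)
        = Finset.Ico (4*(cval - off)) (4*(cval - off)+4) := by
      ext i
      simp only [Finset.mem_filter, Finset.mem_range, Finset.mem_Ico]
      split_ifs <;> omega
    rw [he, Nat.card_Ico]; omega
  · have he : ((Finset.range (4*K+r)).filter fun i => (if i < 4*K then off + i/4 else B) = cval)
        = Finset.Ico (4*K) (4*K+r) := by
      ext i
      simp only [Finset.mem_filter, Finset.mem_range, Finset.mem_Ico]
      split_ifs <;> omega
    rw [he, Nat.card_Ico]; omega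
  · have he : ((Finset.range (4*K+r)).filter fun i => (if i < 4*K then off + i/4 else B) = cval)
        = ∅ := by
      ext i
      simp only [Finset.mem_filter, Finset.mem_range, Finset.notMem_empty, iff_false]
      split_ifs <;> omega
    rw [he]; simp


private lemma backward_aux (l m n L M N r₀ r₁ r₂ : ℕ) (hl : l = 4*L + r₀) (hm : m = 4*M + r₁)
    (hn : n = 4*N + r₂)
    (hshape : (r₀ = 0 ∧ r₁ = 0 ∧ r₂ = 3) ∨ (r₀ = 0 ∧ r₁ = 3 ∧ r₂ = 0) ∨
      (r₀ = 3 ∧ r₁ = 0 ∧ r₂ = 0) ∨ (r₀ = 0 ∧ r₁ = 2 ∧ r₂ = 1) ∨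
      (r₀ = 0 ∧ r₁ = 1 ∧ r₂ = 2) ∨ (r₀ = 2 ∧ r₁ = 0 ∧ r₂ = 1) ∨
      (r₀ = 2 ∧ r₁ = 1 ∧ r₂ = 0) ∨ (r₀ = 1 ∧ r₁ = 0 ∧ r₂ = 2) ∨
      (r₀ = 1 ∧ r₁ = 2 ∧ r₂ = 0)) :
    ∃ f : (Fin l ⊕ Fin m ⊕ Fin n) → Fin (L+M+N+1),
      IsTreeColoring2 (completeTripartiteGraph l m n) (L+M+N+1) f ∧
        IsEquitableColoring (L+M+N+1) f := by
  classical
  subst hl hm hn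
  have hrb : r₀ ≤ 3 ∧ r₁ ≤ 3 ∧ r₂ ≤ 3 ∧ r₀ + r₁ + r₂ = 3 := by
    rcases hshape with h|h|h|h|h|h|h|h|h <;> omega
  set B := L + M + N with hB
  set l := 4*L + r₀
  set m := 4*M + r₁
  set n := 4*N + r₂
  have hgle : ∀ v : Fin l ⊕ Fin m ⊕ Fin n, gfun L M N B v ≤ B := by
    rintro (i|i|i) <;> simp only [gfun] <;> split_ifs <;> omega
  set f : (Fin l ⊕ Fin m ⊕ Fin n) → Fin (B+1) :=
    fun v => ⟨gfun L M N B v % (B+1), Nat.mod_lt _ (Nat.succ_pos B)⟩ with hf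
  have hfval : ∀ v, (f v : ℕ) = gfun L M N B v :=
    fun v => Nat.mod_eq_of_lt (by have := hgle v; omega)
  have hfeq : ∀ (v) (c : Fin (B+1)), f v = c ↔ gfun L M N B v = (c : ℕ) := by
    intro v c; rw [Fin.ext_iff, hfval]
  have hcard : ∀ c : Fin (B+1), (f ⁻¹' {c}).ncard = if (c : ℕ) = B then 3 else 4 := by
    intro c
    have hset : f ⁻¹' {c} = ((Finset.univ.filter fun v => gfun L M N B v = (c : ℕ) : Finset (Fin l ⊕ Fin m ⊕ Fin n)) : Set (Fin l ⊕ Fin m ⊕ Fin n)) := by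
      ext v
      simp only [Set.mem_preimage, Set.mem_singleton_iff, Finset.coe_filter, Finset.mem_univ,
        true_and, Set.mem_setOf_eq]
      exact hfeq v c
    rw [hset, Set.ncard_coe_finset, Finset.card_filter, Fintype.sum_sum_type,
      Fintype.sum_sum_type]
    simp only [gfun]
    erw [Fin.sum_univ_eq_sum_range
        (fun i => if (if i < 4*L then i/4 else B) = (c : ℕ) then 1 else 0) l,
      Fin.sum_univ_eq_sum_range
        (fun i => if (if i < 4*M then L + i/4 else B) = (c : ℕ) then 1 else 0) m,
      Fin.sum_univ_eq_sum_range
        (fun i => if (if i < 4*N then L + M + i/4 else B) = (c : ℕ) then 1 else 0) n,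
      ← Finset.card_filter, ← Finset.card_filter, ← Finset.card_filter]
    have e0 := count_eval L 0 r₀ (c : ℕ) B (by omega) (by omega)
    have e1 := count_eval M L r₁ (c : ℕ) B (by omega) (by omega)
    have e2 := count_eval N (L+M) r₂ (c : ℕ) B (by omega) (by omega)
    simp only [Nat.zero_add] at e0
    rw [e0, e1, e2]
    have := c.isLt
    split_ifs <;> omega
  have hmono : ∀ v w : Fin l ⊕ Fin m ⊕ Fin n, gfun L M N B v = gfun L M N B w →
      gfun L M N B v < B → triPart v = triPart w := by
    rintro (i|i|i) (j|j|j) h1 h2 <;> simp only [gfun] at h1 h2 <;>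
      first
        | rfl
        | (split_ifs at h1 h2 <;> exfalso <;> omega)
  have hempty0 : r₀ = 0 → ∀ v : Fin l ⊕ Fin m ⊕ Fin n,
      gfun L M N B v = B → triPart v ≠ (0 : Fin 3) := by
    intro h0
    rintro (i|i|i) hv
    · intro _
      have hi := i.isLt
      simp only [gfun] at hv
      split_ifs at hv <;> omega
    · simp [triPart]
    · simp [triPart]
  have hempty1 : r₁ = 0 → ∀ v : Fin l ⊕ Fin m ⊕ Fin n,
      gfun L M N B v = B → triPart v ≠ (1 : Fin 3) := by
    intro h0
    rintro (i|i|i) hv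
    · simp [triPart]
    · intro _
      have hi := i.isLt
      simp only [gfun] at hv
      split_ifs at hv <;> omega
    · simp [triPart]
  have hempty2 : r₂ = 0 → ∀ v : Fin l ⊕ Fin m ⊕ Fin n,
      gfun L M N B v = B → triPart v ≠ (2 : Fin 3) := by
    intro h0
    rintro (i|i|i) hv
    · simp [triPart]
    · simp [triPart]
    · intro _
      have hi := i.isLt
      simp only [gfun] at hv
      split_ifs at hv <;> omega
  have huniq0 : r₀ ≤ 1 → ∀ v w : Fin l ⊕ Fin m ⊕ Fin n,
      gfun L M N B v = B → gfun L M N B w = B →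
      triPart v = (0 : Fin 3) → triPart w = (0 : Fin 3) → v = w := by
    intro h0
    rintro (i|i|i) (j|j|j) hv hw hv0 hw0
    · have hi := i.isLt; have hj := j.isLt
      simp only [gfun] at hv hw
      split_ifs at hv hw <;> exact congrArg Sum.inl (Fin.ext (by omega))
    · simp [triPart] at hw0
    · simp [triPart] at hw0
    · simp [triPart] at hv0
    · simp [triPart] at hv0
    · simp [triPart] at hv0
    · simp [triPart] at hv0
    · simp [triPart] at hv0
    · simp [triPart] at hv0
  have huniq1 : r₁ ≤ 1 → ∀ v w : Fin l ⊕ Fin m ⊕ Fin n,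
      gfun L M N B v = B → gfun L M N B w = B →
      triPart v = (1 : Fin 3) → triPart w = (1 : Fin 3) → v = w := by
    intro h0
    rintro (i|i|i) (j|j|j) hv hw hv0 hw0
    · simp [triPart] at hv0
    · simp [triPart] at hv0
    · simp [triPart] at hv0
    · simp [triPart] at hw0
    · have hi := i.isLt; have hj := j.isLt
      simp only [gfun] at hv hw
      split_ifs at hv hw <;>
        exact congrArg (fun x => Sum.inr (Sum.inl x)) (Fin.ext (by omega))
    · simp [triPart] at hw0
    · simp [triPart] at hv0
    · simp [triPart] at hv0
    · simp [triPart] at hv0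
  have huniq2 : r₂ ≤ 1 → ∀ v w : Fin l ⊕ Fin m ⊕ Fin n,
      gfun L M N B v = B → gfun L M N B w = B →
      triPart v = (2 : Fin 3) → triPart w = (2 : Fin 3) → v = w := by
    intro h0
    rintro (i|i|i) (j|j|j) hv hw hv0 hw0
    · simp [triPart] at hv0
    · simp [triPart] at hv0
    · simp [triPart] at hv0
    · simp [triPart] at hv0
    · simp [triPart] at hv0
    · simp [triPart] at hv0
    · simp [triPart] at hw0
    · simp [triPart] at hw0
    · have hi := i.isLt; have hj := j.isLt
      simp only [gfun] at hv hw
      split_ifs at hv hw <;>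
        exact congrArg (fun x => Sum.inr (Sum.inr x)) (Fin.ext (by omega))
  refine ⟨f, ⟨?_, ?_⟩, ?_⟩
  · -- acyclicity
    intro c
    by_cases hc : (c : ℕ) = B
    · have glue : ∀ p₀ p₁ : Fin 3, p₀ ≠ p₁ →
          (∀ v : Fin l ⊕ Fin m ⊕ Fin n, gfun L M N B v = B → triPart v ≠ p₀) →
          (∀ v w : Fin l ⊕ Fin m ⊕ Fin n, gfun L M N B v = B → gfun L M N B w = B →
            triPart v = p₁ → triPart w = p₁ → v = w) →
          ((completeTripartiteGraph l m n).induce (f ⁻¹' {c})).IsAcyclic := by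
        intro p₀ p₁ hne hemp huni
        apply acyclic_of_pseudo_star ((completeTripartiteGraph l m n).induce (f ⁻¹' {c}))
            (fun x => triPart (x : Fin l ⊕ Fin m ⊕ Fin n) = p₁)
        · rintro ⟨v, hv⟩ ⟨w, hw⟩ hadj
          have hgv : gfun L M N B v = B := by
            have := (hfeq v c).mp hv; omega
          have hgw : gfun L M N B w = B := by
            have := (hfeq w c).mp hw; omega
          by_contra hcon
          push_neg at hcon
          exact hadj (fin3_pigeon hne (hemp v hgv) hcon.1 (hemp w hgw) hcon.2)
        · rintro ⟨v, hv⟩ ⟨w, hw⟩ h1 h2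
          have hgv : gfun L M N B v = B := by
            have := (hfeq v c).mp hv; omega
          have hgw : gfun L M N B w = B := by
            have := (hfeq w c).mp hw; omega
          exact Subtype.ext (huni v w hgv hgw h1 h2)
      rcases hshape with h|h|h|h|h|h|h|h|h
      · exact glue 0 1 (by decide) (hempty0 (by omega)) (huniq1 (by omega))
      · exact glue 0 2 (by decide) (hempty0 (by omega)) (huniq2 (by omega))
      · exact glue 1 2 (by decide) (hempty1 (by omega)) (huniq2 (by omega))
      · exact glue 0 2 (by decide) (hempty0 (by omega)) (huniq2 (by omega))
      · exact glue 0 1 (by decide) (hempty0 (by omega)) (huniq1 (by omega))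
      · exact glue 1 2 (by decide) (hempty1 (by omega)) (huniq2 (by omega))
      · exact glue 2 1 (by decide) (hempty2 (by omega)) (huniq1 (by omega))
      · exact glue 1 0 (by decide) (hempty1 (by omega)) (huniq0 (by omega))
      · exact glue 2 0 (by decide) (hempty2 (by omega)) (huniq0 (by omega))
    · apply acyclic_of_pseudo_star ((completeTripartiteGraph l m n).induce (f ⁻¹' {c}))
          (fun _ => False)
      · rintro ⟨v, hv⟩ ⟨w, hw⟩ hadj
        exfalso
        have hgv : gfun L M N B v = (c : ℕ) := (hfeq v c).mp hv
        have hgw : gfun L M N B w = (c : ℕ) := (hfeq w c).mp hw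
        have hlt : gfun L M N B v < B := by have := c.isLt; omega
        exact hadj (hmono v w (by rw [hgv, hgw]) hlt)
      · rintro _ _ h _
        exact h.elim
  · -- degree
    intro v
    by_cases hvB : gfun L M N B v = B
    · have hsub : {w | (completeTripartiteGraph l m n).Adj v w ∧ f w = f v}
          ⊆ (f ⁻¹' {f v}) \ {v} := by
        rintro w ⟨haj, hfw⟩
        exact ⟨hfw, fun hw => haj.ne' hw⟩
      have h1 : (f ⁻¹' {f v}).ncard = 3 := by
        rw [hcard, if_pos (by rw [hfval]; exact hvB)]
      have h2 : ((f ⁻¹' {f v}) \ {v}).ncard = 2 := by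
        rw [Set.ncard_diff_singleton_of_mem (show v ∈ f ⁻¹' {f v} from rfl), h1]
      calc Set.ncard {w | (completeTripartiteGraph l m n).Adj v w ∧ f w = f v}
          ≤ ((f ⁻¹' {f v}) \ {v}).ncard := Set.ncard_le_ncard hsub (Set.toFinite _)
        _ = 2 := h2
    · have hvB' : gfun L M N B v < B := lt_of_le_of_ne (hgle v) hvB
      have hempty : {w | (completeTripartiteGraph l m n).Adj v w ∧ f w = f v} = ∅ := by
        ext w
        simp only [Set.mem_setOf_eq, Set.mem_empty_iff_false, iff_false, not_and]
        intro haj hfw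
        have : gfun L M N B v = gfun L M N B w := by
          rw [← hfval v, ← hfval w, hfw]
        exact haj (hmono v w this hvB')
      rw [hempty]
      simp
  · -- equitable
    intro c₁ c₂
    rw [hcard c₁, hcard c₂]
    split_ifs <;> omega


private lemma arith_mono4 (x0 x1 x2 s : ℕ)
    (h01 : ¬ (2 ≤ x0 ∧ 2 ≤ x1)) (h02 : ¬ (2 ≤ x0 ∧ 2 ≤ x2)) (h12 : ¬ (2 ≤ x1 ∧ 2 ≤ x2))
    (d01 : ¬ (3 ≤ x0 ∧ 1 ≤ x1)) (d02 : ¬ (3 ≤ x0 ∧ 1 ≤ x2)) (d10 : ¬ (3 ≤ x1 ∧ 1 ≤ x0))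
    (d12 : ¬ (3 ≤ x1 ∧ 1 ≤ x2)) (d20 : ¬ (3 ≤ x2 ∧ 1 ≤ x0)) (d21 : ¬ (3 ≤ x2 ∧ 1 ≤ x1))
    (htri : ¬ (1 ≤ x0 ∧ 1 ≤ x1 ∧ 1 ≤ x2))
    (hs : s = x0 + x1 + x2) (h4 : s = 4) :
    4 ∣ x0 ∧ 4 ∣ x1 ∧ 4 ∣ x2 := by omega

private lemma arith_shape3 (x0 x1 x2 s : ℕ)
    (d01 : ¬ (3 ≤ x0 ∧ 1 ≤ x1)) (d02 : ¬ (3 ≤ x0 ∧ 1 ≤ x2)) (d10 : ¬ (3 ≤ x1 ∧ 1 ≤ x0))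
    (d12 : ¬ (3 ≤ x1 ∧ 1 ≤ x2)) (d20 : ¬ (3 ≤ x2 ∧ 1 ≤ x0)) (d21 : ¬ (3 ≤ x2 ∧ 1 ≤ x1))
    (htri : ¬ (1 ≤ x0 ∧ 1 ≤ x1 ∧ 1 ≤ x2))
    (hs : s = x0 + x1 + x2) (h3 : s = 3) :
    (x0 = 0 ∧ x1 = 0 ∧ x2 = 3) ∨ (x0 = 0 ∧ x1 = 3 ∧ x2 = 0) ∨ (x0 = 3 ∧ x1 = 0 ∧ x2 = 0) ∨
    (x0 = 0 ∧ x1 = 2 ∧ x2 = 1) ∨ (x0 = 0 ∧ x1 = 1 ∧ x2 = 2) ∨ (x0 = 2 ∧ x1 = 0 ∧ x2 = 1) ∨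
    (x0 = 2 ∧ x1 = 1 ∧ x2 = 0) ∨ (x0 = 1 ∧ x1 = 0 ∧ x2 = 2) ∨ (x0 = 1 ∧ x1 = 2 ∧ x2 = 0) := by
  have e0 : x0 = 0 ∨ x0 = 1 ∨ x0 = 2 ∨ x0 = 3 := by omega
  have e1 : x1 = 0 ∨ x1 = 1 ∨ x1 = 2 ∨ x1 = 3 := by omega
  have e2 : x2 = 0 ∨ x2 = 1 ∨ x2 = 2 ∨ x2 = 3 := by omega
  rcases e0 with rfl|rfl|rfl|rfl <;> rcases e1 with rfl|rfl|rfl|rfl <;>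
    rcases e2 with rfl|rfl|rfl|rfl <;> first | decide | omega

private lemma arith_mod4 (l s a : ℕ) (h : l = a + s) (hdvd : 4 ∣ s) (ha : a ≤ 3) :
    l % 4 = a := by omega


set_option maxHeartbeats 1000000 in
private lemma forward_aux (l m n b : ℕ)
    (hsum : l + m + n = 4*b + 3)
    (f : Fin l ⊕ Fin m ⊕ Fin n → Fin (b+1))
    (hac : ∀ c : Fin (b+1), ((completeTripartiteGraph l m n).induce (f ⁻¹' {c})).IsAcyclic)
    (hdeg : ∀ v, Set.ncard {w | (completeTripartiteGraph l m n).Adj v w ∧ f w = f v} ≤ 2)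
    (heq : ∀ c₁ c₂ : Fin (b+1), (f ⁻¹' {c₁}).ncard ≤ (f ⁻¹' {c₂}).ncard + 1) :
    ∃ a₀ a₁ a₂ : ℕ, l % 4 = a₀ ∧ m % 4 = a₁ ∧ n % 4 = a₂ ∧
      ((a₀ = 0 ∧ a₁ = 0 ∧ a₂ = 3) ∨ (a₀ = 0 ∧ a₁ = 3 ∧ a₂ = 0) ∨ (a₀ = 3 ∧ a₁ = 0 ∧ a₂ = 0) ∨
       (a₀ = 0 ∧ a₁ = 2 ∧ a₂ = 1) ∨ (a₀ = 0 ∧ a₁ = 1 ∧ a₂ = 2) ∨ (a₀ = 2 ∧ a₁ = 0 ∧ a₂ = 1) ∨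
       (a₀ = 2 ∧ a₁ = 1 ∧ a₂ = 0) ∨ (a₀ = 1 ∧ a₁ = 0 ∧ a₂ = 2) ∨ (a₀ = 1 ∧ a₁ = 2 ∧ a₂ = 0)) := by
  classical
  -- notation
  set G := completeTripartiteGraph l m n with hG
  -- size of a class
  have hncard : ∀ c : Fin (b+1), (f ⁻¹' {c}).ncard = (univ.filter fun v => f v = c).card := by
    intro c
    have : f ⁻¹' {c} = ((univ.filter fun v => f v = c :
        Finset (Fin l ⊕ Fin m ⊕ Fin n)) : Set (Fin l ⊕ Fin m ⊕ Fin n)) := by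
      ext v; simp
    rw [this, Set.ncard_coe_finset]
  have heq' : ∀ c₁ c₂ : Fin (b+1), (univ.filter fun v => f v = c₁).card ≤
      (univ.filter fun v => f v = c₂).card + 1 := by
    intro c₁ c₂; have := heq c₁ c₂; rwa [hncard, hncard] at this
  -- total count
  have htot : ∑ c : Fin (b+1), (univ.filter fun v => f v = c).card = 4*b + 3 := by
    rw [← Finset.card_eq_sum_card_fiberwise (fun x _ => Finset.mem_univ (f x))]
    simp only [Finset.card_univ, Fintype.card_sum, Fintype.card_fin]
    omega
  -- C4 constraint
  have hC4 : ∀ (c : Fin (b+1)) (p₀ p₁ : Fin 3), p₀ ≠ p₁ →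
      ¬ (2 ≤ (univ.filter fun v => triPart v = p₀ ∧ f v = c).card ∧
         2 ≤ (univ.filter fun v => triPart v = p₁ ∧ f v = c).card) := by
    rintro c p₀ p₁ hne ⟨h0, h1⟩
    obtain ⟨v₁, hv₁, v₂, hv₂, hvne⟩ := Finset.one_lt_card.mp
      (by omega : 1 < (univ.filter fun v => triPart v = p₀ ∧ f v = c).card)
    obtain ⟨w₁, hw₁, w₂, hw₂, hwne⟩ := Finset.one_lt_card.mp
      (by omega : 1 < (univ.filter fun v => triPart v = p₁ ∧ f v = c).card)
    simp only [Finset.mem_filter, Finset.mem_univ, true_and] at hv₁ hv₂ hw₁ hw₂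
    have m₁ : v₁ ∈ f ⁻¹' {c} := hv₁.2
    have m₂ : v₂ ∈ f ⁻¹' {c} := hv₂.2
    have m₃ : w₁ ∈ f ⁻¹' {c} := hw₁.2
    have m₄ : w₂ ∈ f ⁻¹' {c} := hw₂.2
    refine not_isAcyclic_of_square (G := G.induce (f ⁻¹' {c}))
      (a := ⟨v₁, m₁⟩) (b := ⟨w₁, m₃⟩) (c := ⟨v₂, m₂⟩) (d := ⟨w₂, m₄⟩)
      (fun h => hvne (congrArg Subtype.val h))
      (fun h => hwne (congrArg Subtype.val h))
      ?_ ?_ ?_ ?_ (hac c)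
    · show triPart v₁ ≠ triPart w₁
      rw [hv₁.1, hw₁.1]; exact hne
    · show triPart w₁ ≠ triPart v₂
      rw [hv₂.1, hw₁.1]; exact hne.symm
    · show triPart v₂ ≠ triPart w₂
      rw [hv₂.1, hw₂.1]; exact hne
    · show triPart w₂ ≠ triPart v₁
      rw [hv₁.1, hw₂.1]; exact hne.symm
  -- triangle constraint
  have hTri : ∀ c : Fin (b+1),
      ¬ (1 ≤ (univ.filter fun v => triPart v = 0 ∧ f v = c).card ∧
         1 ≤ (univ.filter fun v => triPart v = 1 ∧ f v = c).card ∧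
         1 ≤ (univ.filter fun v => triPart v = 2 ∧ f v = c).card) := by
    rintro c ⟨h0, h1, h2⟩
    obtain ⟨x, hx⟩ := Finset.card_pos.mp
      (by omega : 0 < (univ.filter fun v => triPart v = 0 ∧ f v = c).card)
    obtain ⟨y, hy⟩ := Finset.card_pos.mp
      (by omega : 0 < (univ.filter fun v => triPart v = 1 ∧ f v = c).card)
    obtain ⟨z, hz⟩ := Finset.card_pos.mp
      (by omega : 0 < (univ.filter fun v => triPart v = 2 ∧ f v = c).card)
    simp only [Finset.mem_filter, Finset.mem_univ, true_and] at hx hy hz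
    refine not_isAcyclic_of_triangle (G := G.induce (f ⁻¹' {c}))
      (a := ⟨x, hx.2⟩) (b := ⟨y, hy.2⟩) (c := ⟨z, hz.2⟩) ?_ ?_ ?_ (hac c)
    · show triPart x ≠ triPart y
      rw [hx.1, hy.1]; omega
    · show triPart y ≠ triPart z
      rw [hy.1, hz.1]; omega
    · show triPart z ≠ triPart x
      rw [hz.1, hx.1]; omega
  -- degree constraint
  have hDeg : ∀ (c : Fin (b+1)) (p₀ p₁ : Fin 3), p₀ ≠ p₁ →
      ¬ (3 ≤ (univ.filter fun v => triPart v = p₀ ∧ f v = c).card ∧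
         1 ≤ (univ.filter fun v => triPart v = p₁ ∧ f v = c).card) := by
    rintro c p₀ p₁ hne ⟨h0, h1⟩
    obtain ⟨v, hv⟩ := Finset.card_pos.mp
      (by omega : 0 < (univ.filter fun v => triPart v = p₁ ∧ f v = c).card)
    obtain ⟨t, hts, ht3⟩ := Finset.exists_subset_card_eq h0
    obtain ⟨x, y, z, hxy, hxz, hyz, rfl⟩ := Finset.card_eq_three.mp ht3
    have hx := hts (Finset.mem_insert_self _ _)
    have hy := hts (Finset.mem_insert_of_mem (Finset.mem_insert_self _ _))
    have hz := hts (Finset.mem_insert_of_mem (Finset.mem_insert_of_mem (Finset.mem_singleton_self _)))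
    simp only [Finset.mem_filter, Finset.mem_univ, true_and] at hv hx hy hz
    have hsub : ({x, y, z} : Set (Fin l ⊕ Fin m ⊕ Fin n)) ⊆
        {w | G.Adj v w ∧ f w = f v} := by
      rintro w (rfl | rfl | rfl)
      · exact ⟨show triPart v ≠ triPart w from by rw [hv.1, hx.1]; exact hne.symm, by rw [hx.2, hv.2]⟩
      · exact ⟨show triPart v ≠ triPart w from by rw [hv.1, hy.1]; exact hne.symm, by rw [hy.2, hv.2]⟩
      · exact ⟨show triPart v ≠ triPart w from by rw [hv.1, hz.1]; exact hne.symm, by rw [hz.2, hv.2]⟩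
    have h3 : ({x, y, z} : Set (Fin l ⊕ Fin m ⊕ Fin n)).ncard = 3 :=
      Set.ncard_eq_three.mpr ⟨x, y, z, hxy, hxz, hyz, rfl⟩
    have := Set.ncard_le_ncard hsub (Set.toFinite _)
    have := hdeg v
    omega
  -- sizes are between 3 and 4
  have hle4 : ∀ c : Fin (b+1), (univ.filter fun v => f v = c).card ≤ 4 := by
    by_contra hcon
    push_neg at hcon
    obtain ⟨c, hc⟩ := hcon
    have hall : ∀ c' : Fin (b+1), 4 ≤ (univ.filter fun v => f v = c').card := by
      intro c'
      have := heq' c c'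
      omega
    have := Finset.card_nsmul_le_sum Finset.univ
      (fun c : Fin (b+1) => (univ.filter fun v => f v = c).card) 4 (fun x _ => hall x)
    simp only [Finset.card_univ, Fintype.card_fin, smul_eq_mul] at this
    omega
  have hge3 : ∀ c : Fin (b+1), 3 ≤ (univ.filter fun v => f v = c).card := by
    intro c
    by_contra hlt
    push_neg at hlt
    have hall : ∀ c' : Fin (b+1), (univ.filter fun v => f v = c').card ≤ 3 := by
      intro c'
      have := heq' c' c
      omega
    have hsle := Finset.sum_le_card_nsmul Finset.univ
      (fun c : Fin (b+1) => (univ.filter fun v => f v = c).card) 3 (fun x _ => hall x)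
    simp only [Finset.card_univ, Fintype.card_fin, smul_eq_mul] at hsle
    have hb0 : b = 0 := by omega
    subst hb0
    have huniq : ∀ c' : Fin (0+1), c' = c := fun c' => Fin.ext (by omega)
    have : ∑ c' : Fin (0+1), (univ.filter fun v => f v = c').card
        = (univ.filter fun v => f v = c).card := by
      rw [show (Finset.univ : Finset (Fin (0+1))) = {c} from
        (Finset.eq_singleton_iff_unique_mem).mpr ⟨Finset.mem_univ c, fun x _ => huniq x⟩]
      simp
    omega
  -- split size into part counts
  have hsplit : ∀ c : Fin (b+1), (univ.filter fun v => f v = c).card =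
      (univ.filter fun v => triPart v = 0 ∧ f v = c).card +
      (univ.filter fun v => triPart v = 1 ∧ f v = c).card +
      (univ.filter fun v => triPart v = 2 ∧ f v = c).card := by
    intro c
    rw [Finset.card_filter, Finset.card_filter, Finset.card_filter, Finset.card_filter,
      ← Finset.sum_add_distrib, ← Finset.sum_add_distrib]
    apply Finset.sum_congr rfl
    rintro (i|i|i) _
    · by_cases h : f (Sum.inl i) = c <;> simp [h, triPart]
    · by_cases h : f (Sum.inr (Sum.inl i)) = c <;> simp [h, triPart]
    · by_cases h : f (Sum.inr (Sum.inr i)) = c <;> simp [h, triPart]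
  -- part totals
  have hpart0 : (((univ : Finset (Fin l ⊕ Fin m ⊕ Fin n))).filter fun v => triPart v = (0 : Fin 3)).card = l := by
    rw [Finset.card_filter, Fintype.sum_sum_type, Fintype.sum_sum_type]
    simp [triPart]
  have hpart1 : (((univ : Finset (Fin l ⊕ Fin m ⊕ Fin n))).filter fun v => triPart v = (1 : Fin 3)).card = m := by
    rw [Finset.card_filter, Fintype.sum_sum_type, Fintype.sum_sum_type]
    simp [triPart]
  have hpart2 : (((univ : Finset (Fin l ⊕ Fin m ⊕ Fin n))).filter fun v => triPart v = (2 : Fin 3)).card = n := by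
    rw [Finset.card_filter, Fintype.sum_sum_type, Fintype.sum_sum_type]
    simp [triPart]
  have hfib : ∀ p : Fin 3, (((univ : Finset (Fin l ⊕ Fin m ⊕ Fin n))).filter fun v => triPart v = p).card
      = ∑ c : Fin (b+1), (univ.filter fun v => triPart v = p ∧ f v = c).card := by
    intro p
    rw [Finset.card_eq_sum_card_fiberwise (f := f) (t := univ) (fun x _ => Finset.mem_univ _)]
    apply Finset.sum_congr rfl
    intro c _
    rw [Finset.filter_filter]
  -- exactly one class of size 3, the rest have size 4
  have hsum_split := Finset.sum_filter_add_sum_filter_not univ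
    (fun c : Fin (b+1) => (univ.filter fun v => f v = c).card = 4)
    (fun c => (univ.filter fun v => f v = c).card)
  have hsumT : ∑ c ∈ univ.filter (fun c : Fin (b+1) =>
      (univ.filter fun v => f v = c).card = 4), (univ.filter fun v => f v = c).card
      = (univ.filter (fun c : Fin (b+1) =>
        (univ.filter fun v => f v = c).card = 4)).card * 4 :=
    Finset.sum_const_nat (fun x hx => (Finset.mem_filter.mp hx).2)
  have hsumS : ∑ c ∈ univ.filter (fun c : Fin (b+1) =>
      ¬ (univ.filter fun v => f v = c).card = 4), (univ.filter fun v => f v = c).card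
      = (univ.filter (fun c : Fin (b+1) =>
        ¬ (univ.filter fun v => f v = c).card = 4)).card * 3 :=
    Finset.sum_const_nat (fun x hx => by
      have h1 := (Finset.mem_filter.mp hx).2
      have h2 := hge3 x
      have h3 := hle4 x
      omega)
  have hcards := Finset.card_filter_add_card_filter_not
    (s := (univ : Finset (Fin (b+1))))
    (p := fun c => (univ.filter fun v => f v = c).card = 4)
  rw [Finset.card_univ, Fintype.card_fin] at hcards
  have hS1 : (univ.filter (fun c : Fin (b+1) =>
      ¬ (univ.filter fun v => f v = c).card = 4)).card = 1 := by omega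
  obtain ⟨c₀, hc₀⟩ := Finset.card_eq_one.mp hS1
  have hc₀3 : (univ.filter fun v => f v = c₀).card = 3 := by
    have hmem : c₀ ∈ univ.filter (fun c : Fin (b+1) =>
        ¬ (univ.filter fun v => f v = c).card = 4) := by
      rw [hc₀]; exact Finset.mem_singleton_self _
    have h1 := (Finset.mem_filter.mp hmem).2
    have h2 := hge3 c₀
    have h3 := hle4 c₀
    omega
  have hc4 : ∀ c : Fin (b+1), c ≠ c₀ → (univ.filter fun v => f v = c).card = 4 := by
    intro c hcc
    by_contra hne4
    have hmem : c ∈ univ.filter (fun c : Fin (b+1) =>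
        ¬ (univ.filter fun v => f v = c).card = 4) :=
      Finset.mem_filter.mpr ⟨Finset.mem_univ _, hne4⟩
    rw [hc₀] at hmem
    exact hcc (Finset.mem_singleton.mp hmem)
  -- size-4 classes are monochromatic
  have hdvd : ∀ c : Fin (b+1), c ≠ c₀ →
      (4 ∣ (univ.filter fun v => triPart v = 0 ∧ f v = c).card) ∧
      (4 ∣ (univ.filter fun v => triPart v = 1 ∧ f v = c).card) ∧
      (4 ∣ (univ.filter fun v => triPart v = 2 ∧ f v = c).card) := by
    intro c hcc
    have h01 := hC4 c 0 1 (by decide)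
    have h02 := hC4 c 0 2 (by decide)
    have h12 := hC4 c 1 2 (by decide)
    have d01 := hDeg c 0 1 (by decide)
    have d02 := hDeg c 0 2 (by decide)
    have d10 := hDeg c 1 0 (by decide)
    have d12 := hDeg c 1 2 (by decide)
    have d20 := hDeg c 2 0 (by decide)
    have d21 := hDeg c 2 1 (by decide)
    have htri := hTri c
    have hs := hsplit c
    have h4 := hc4 c hcc
    exact arith_mono4 _ _ _ _ h01 h02 h12 d01 d02 d10 d12 d20 d21 htri hs h4
  -- the shape of the size-3 class
  have hshape :
      ((univ.filter fun v => triPart v = 0 ∧ f v = c₀).card = 0 ∧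
        (univ.filter fun v => triPart v = 1 ∧ f v = c₀).card = 0 ∧
        (univ.filter fun v => triPart v = 2 ∧ f v = c₀).card = 3) ∨
      ((univ.filter fun v => triPart v = 0 ∧ f v = c₀).card = 0 ∧
        (univ.filter fun v => triPart v = 1 ∧ f v = c₀).card = 3 ∧
        (univ.filter fun v => triPart v = 2 ∧ f v = c₀).card = 0) ∨
      ((univ.filter fun v => triPart v = 0 ∧ f v = c₀).card = 3 ∧
        (univ.filter fun v => triPart v = 1 ∧ f v = c₀).card = 0 ∧
        (univ.filter fun v => triPart v = 2 ∧ f v = c₀).card = 0) ∨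
      ((univ.filter fun v => triPart v = 0 ∧ f v = c₀).card = 0 ∧
        (univ.filter fun v => triPart v = 1 ∧ f v = c₀).card = 2 ∧
        (univ.filter fun v => triPart v = 2 ∧ f v = c₀).card = 1) ∨
      ((univ.filter fun v => triPart v = 0 ∧ f v = c₀).card = 0 ∧
        (univ.filter fun v => triPart v = 1 ∧ f v = c₀).card = 1 ∧
        (univ.filter fun v => triPart v = 2 ∧ f v = c₀).card = 2) ∨
      ((univ.filter fun v => triPart v = 0 ∧ f v = c₀).card = 2 ∧
        (univ.filter fun v => triPart v = 1 ∧ f v = c₀).card = 0 ∧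
        (univ.filter fun v => triPart v = 2 ∧ f v = c₀).card = 1) ∨
      ((univ.filter fun v => triPart v = 0 ∧ f v = c₀).card = 2 ∧
        (univ.filter fun v => triPart v = 1 ∧ f v = c₀).card = 1 ∧
        (univ.filter fun v => triPart v = 2 ∧ f v = c₀).card = 0) ∨
      ((univ.filter fun v => triPart v = 0 ∧ f v = c₀).card = 1 ∧
        (univ.filter fun v => triPart v = 1 ∧ f v = c₀).card = 0 ∧
        (univ.filter fun v => triPart v = 2 ∧ f v = c₀).card = 2) ∨
      ((univ.filter fun v => triPart v = 0 ∧ f v = c₀).card = 1 ∧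
        (univ.filter fun v => triPart v = 1 ∧ f v = c₀).card = 2 ∧
        (univ.filter fun v => triPart v = 2 ∧ f v = c₀).card = 0) := by
    have d01 := hDeg c₀ 0 1 (by decide)
    have d02 := hDeg c₀ 0 2 (by decide)
    have d10 := hDeg c₀ 1 0 (by decide)
    have d12 := hDeg c₀ 1 2 (by decide)
    have d20 := hDeg c₀ 2 0 (by decide)
    have d21 := hDeg c₀ 2 1 (by decide)
    have htri := hTri c₀
    have hs := hsplit c₀
    exact arith_shape3 _ _ _ _ d01 d02 d10 d12 d20 d21 htri hs hc₀3
  -- per-part congruences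
  have hl0 : l = (univ.filter fun v => triPart v = 0 ∧ f v = c₀).card +
      ∑ c ∈ univ.erase c₀, (univ.filter fun v => triPart v = 0 ∧ f v = c).card := by
    have h := hfib 0
    rw [← Finset.add_sum_erase _ _ (Finset.mem_univ c₀), hpart0] at h
    exact h
  have hm0 : m = (univ.filter fun v => triPart v = 1 ∧ f v = c₀).card +
      ∑ c ∈ univ.erase c₀, (univ.filter fun v => triPart v = 1 ∧ f v = c).card := by
    have h := hfib 1
    rw [← Finset.add_sum_erase _ _ (Finset.mem_univ c₀), hpart1] at h
    exact h
  have hn0 : n = (univ.filter fun v => triPart v = 2 ∧ f v = c₀).card +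
      ∑ c ∈ univ.erase c₀, (univ.filter fun v => triPart v = 2 ∧ f v = c).card := by
    have h := hfib 2
    rw [← Finset.add_sum_erase _ _ (Finset.mem_univ c₀), hpart2] at h
    exact h
  have hdl : 4 ∣ ∑ c ∈ univ.erase c₀, (univ.filter fun v => triPart v = 0 ∧ f v = c).card :=
    Finset.dvd_sum (fun c hc => (hdvd c (Finset.ne_of_mem_erase hc)).1)
  have hdm : 4 ∣ ∑ c ∈ univ.erase c₀, (univ.filter fun v => triPart v = 1 ∧ f v = c).card :=
    Finset.dvd_sum (fun c hc => (hdvd c (Finset.ne_of_mem_erase hc)).2.1)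
  have hdn : 4 ∣ ∑ c ∈ univ.erase c₀, (univ.filter fun v => triPart v = 2 ∧ f v = c).card :=
    Finset.dvd_sum (fun c hc => (hdvd c (Finset.ne_of_mem_erase hc)).2.2)
  have hb : (univ.filter fun v => triPart v = 0 ∧ f v = c₀).card ≤ 3 ∧
      (univ.filter fun v => triPart v = 1 ∧ f v = c₀).card ≤ 3 ∧
      (univ.filter fun v => triPart v = 2 ∧ f v = c₀).card ≤ 3 := by
    rcases hshape with ⟨h1, h2, h3⟩|⟨h1, h2, h3⟩|⟨h1, h2, h3⟩|⟨h1, h2, h3⟩|⟨h1, h2, h3⟩|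
      ⟨h1, h2, h3⟩|⟨h1, h2, h3⟩|⟨h1, h2, h3⟩|⟨h1, h2, h3⟩ <;>
      exact ⟨by rw [h1]; try omega, by rw [h2]; try omega, by rw [h3]; try omega⟩
  exact ⟨(univ.filter fun v => triPart v = 0 ∧ f v = c₀).card,
    (univ.filter fun v => triPart v = 1 ∧ f v = c₀).card,
    (univ.filter fun v => triPart v = 2 ∧ f v = c₀).card,
    arith_mod4 _ _ _ hl0 hdl hb.1, arith_mod4 _ _ _ hm0 hdm hb.2.1,
    arith_mod4 _ _ _ hn0 hdn hb.2.2, hshape⟩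

end Helpers

theorem statement16 (l m n b : ℕ) (hl : 0 < l) (hlm : l ≤ m) (hmn : m ≤ n)
    (hsum : l + m + n = 4 * b + 3) :
    HasEquitableTreeColoring2 (completeTripartiteGraph l m n) (b + 1) ↔
      ConditionA l m n := by
  have hm : 0 < m := lt_of_lt_of_le hl hlm
  have hn : 0 < n := lt_of_lt_of_le hm hmn
  constructor
  · rintro ⟨f, ⟨hac, hdeg⟩, heq⟩
    obtain ⟨a₀, a₁, a₂, h₀, h₁, h₂, hsh⟩ := forward_aux l m n b hsum f hac hdeg heq
    refine ⟨(l+3)/4, (m+3)/4, (n+3)/4, by omega, by omega, by omega, ?_⟩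
    rcases hsh with ⟨e0,e1,e2⟩|⟨e0,e1,e2⟩|⟨e0,e1,e2⟩|⟨e0,e1,e2⟩|⟨e0,e1,e2⟩|⟨e0,e1,e2⟩|
      ⟨e0,e1,e2⟩|⟨e0,e1,e2⟩|⟨e0,e1,e2⟩
    · refine Or.inl ?_
      simp only [Prod.mk.injEq]
      exact ⟨by omega, by omega, by omega⟩
    · refine Or.inr (Or.inl ?_)
      simp only [Prod.mk.injEq]
      exact ⟨by omega, by omega, by omega⟩
    · refine Or.inr (Or.inr (Or.inl ?_))
      simp only [Prod.mk.injEq]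
      exact ⟨by omega, by omega, by omega⟩
    · refine Or.inr (Or.inr (Or.inr (Or.inl ?_)))
      simp only [Prod.mk.injEq]
      exact ⟨by omega, by omega, by omega⟩
    · refine Or.inr (Or.inr (Or.inr (Or.inr (Or.inl ?_))))
      simp only [Prod.mk.injEq]
      exact ⟨by omega, by omega, by omega⟩
    · refine Or.inr (Or.inr (Or.inr (Or.inr (Or.inr (Or.inl ?_)))))
      simp only [Prod.mk.injEq]
      exact ⟨by omega, by omega, by omega⟩
    · refine Or.inr (Or.inr (Or.inr (Or.inr (Or.inr (Or.inr (Or.inl ?_))))))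
      simp only [Prod.mk.injEq]
      exact ⟨by omega, by omega, by omega⟩
    · refine Or.inr (Or.inr (Or.inr (Or.inr (Or.inr (Or.inr (Or.inr (Or.inl ?_)))))))
      simp only [Prod.mk.injEq]
      exact ⟨by omega, by omega, by omega⟩
    · refine Or.inr (Or.inr (Or.inr (Or.inr (Or.inr (Or.inr (Or.inr (Or.inr (?_))))))))
      simp only [Prod.mk.injEq]
      exact ⟨by omega, by omega, by omega⟩
  · rintro ⟨j, h, k, hj, hh, hk, hcase⟩
    simp only [Prod.mk.injEq] at hcase
    have hres : (l % 4 = 0 ∧ m % 4 = 0 ∧ n % 4 = 3) ∨ (l % 4 = 0 ∧ m % 4 = 3 ∧ n % 4 = 0) ∨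
        (l % 4 = 3 ∧ m % 4 = 0 ∧ n % 4 = 0) ∨ (l % 4 = 0 ∧ m % 4 = 2 ∧ n % 4 = 1) ∨
        (l % 4 = 0 ∧ m % 4 = 1 ∧ n % 4 = 2) ∨ (l % 4 = 2 ∧ m % 4 = 0 ∧ n % 4 = 1) ∨
        (l % 4 = 2 ∧ m % 4 = 1 ∧ n % 4 = 0) ∨ (l % 4 = 1 ∧ m % 4 = 0 ∧ n % 4 = 2) ∨
        (l % 4 = 1 ∧ m % 4 = 2 ∧ n % 4 = 0) := by
      rcases hcase with ⟨e0,e1,e2⟩|⟨e0,e1,e2⟩|⟨e0,e1,e2⟩|⟨e0,e1,e2⟩|⟨e0,e1,e2⟩|⟨e0,e1,e2⟩|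
        ⟨e0,e1,e2⟩|⟨e0,e1,e2⟩|⟨e0,e1,e2⟩
      · refine Or.inl ?_
        exact ⟨by omega, by omega, by omega⟩
      · refine Or.inr (Or.inl ?_)
        exact ⟨by omega, by omega, by omega⟩
      · refine Or.inr (Or.inr (Or.inl ?_))
        exact ⟨by omega, by omega, by omega⟩
      · refine Or.inr (Or.inr (Or.inr (Or.inl ?_)))
        exact ⟨by omega, by omega, by omega⟩
      · refine Or.inr (Or.inr (Or.inr (Or.inr (Or.inl ?_))))
        exact ⟨by omega, by omega, by omega⟩
      · refine Or.inr (Or.inr (Or.inr (Or.inr (Or.inr (Or.inl ?_)))))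
        exact ⟨by omega, by omega, by omega⟩
      · refine Or.inr (Or.inr (Or.inr (Or.inr (Or.inr (Or.inr (Or.inl ?_))))))
        exact ⟨by omega, by omega, by omega⟩
      · refine Or.inr (Or.inr (Or.inr (Or.inr (Or.inr (Or.inr (Or.inr (Or.inl ?_)))))))
        exact ⟨by omega, by omega, by omega⟩
      · refine Or.inr (Or.inr (Or.inr (Or.inr (Or.inr (Or.inr (Or.inr (Or.inr (?_))))))))
        exact ⟨by omega, by omega, by omega⟩
    obtain rfl : b = l / 4 + m / 4 + n / 4 := by omega
    exact backward_aux l m n (l / 4) (m / 4) (n / 4) (l % 4) (m % 4) (n % 4)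
      (by omega) (by omega) (by omega) hres
end
end

section
/- Let l ≤ m ≤ n be positive integers with l + m + n = 4b + 3 for a positive integer b. Then K_{l,m,n} has an equitable (b,2)-tree-coloring if and only if (l,m,n) satisfies Condition B. -/
open SimpleGraph

noncomputable section

namespace Statement17Aux

/-- bucket function: first `a` classes of size 4, then classes of size 5 -/
def gfun (a : ℕ) (i : ℕ) : ℕ := if i < 4*a then i/4 else a + (i - 4*a)/5

lemma gfun_lt {a c i : ℕ} (h : i < 4*a+5*c) : gfun a i < a + c := by
  unfold gfun; split_ifs <;> omega

lemma ncard_val_interval (l lo w : ℕ) (h : lo + w ≤ l) :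
    {x : Fin l | lo ≤ x.val ∧ x.val < lo + w}.ncard = w := by
  classical
  have hmem : ∀ m ∈ Finset.Ico lo (lo+w), m < l := by
    intro m hm; rw [Finset.mem_Ico] at hm; omega
  have hset : {x : Fin l | lo ≤ x.val ∧ x.val < lo + w}
      = ↑((Finset.Ico lo (lo+w)).attachFin hmem) := by
    ext x; simp [Finset.mem_attachFin, Finset.mem_Ico]
  rw [hset, Set.ncard_coe_finset, Finset.card_attachFin, Nat.card_Ico]
  omega

lemma fiber_gfun (lp a c : ℕ) (hl : lp = 4*a+5*c) (t : ℕ) (ht : t < a + c) :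
    ∃ w, 4 ≤ w ∧ w ≤ 5 ∧ {x : Fin lp | gfun a x.val = t}.ncard = w := by
  by_cases h : t < a
  · refine ⟨4, by norm_num, by norm_num, ?_⟩
    have hset : {x : Fin lp | gfun a x.val = t}
        = {x : Fin lp | 4*t ≤ x.val ∧ x.val < 4*t + 4} := by
      ext x
      have hx := x.isLt
      simp only [Set.mem_setOf_eq, gfun]
      split_ifs <;> omega
    rw [hset]; exact ncard_val_interval _ _ _ (by omega)
  · refine ⟨5, by norm_num, by norm_num, ?_⟩
    have hset : {x : Fin lp | gfun a x.val = t}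
        = {x : Fin lp | 4*a+5*(t-a) ≤ x.val ∧ x.val < (4*a+5*(t-a)) + 5} := by
      ext x
      have hx := x.isLt
      simp only [Set.mem_setOf_eq, gfun]
      split_ifs <;> omega
    rw [hset]; exact ncard_val_interval _ _ _ (by omega)

end Statement17Aux

namespace Statement17Aux

def Ffun (a₀ c₀ a₁ c₁ a₂ : ℕ) {l m n : ℕ} : (Fin l ⊕ Fin m ⊕ Fin n) → ℕ
  | Sum.inl i => gfun a₀ i.val
  | Sum.inr (Sum.inl i) => a₀ + c₀ + gfun a₁ i.val
  | Sum.inr (Sum.inr i) => a₀ + c₀ + a₁ + c₁ + gfun a₂ i.val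

lemma build {l m n b : ℕ} (a₀ c₀ a₁ c₁ a₂ c₂ : ℕ)
    (h0 : l = 4*a₀+5*c₀) (h1 : m = 4*a₁+5*c₁) (h2 : n = 4*a₂+5*c₂)
    (hb : b = a₀+c₀+a₁+c₁+a₂+c₂) :
    HasEquitableTreeColoring2 (completeTripartiteGraph l m n) b := by
  classical
  have hFlt : ∀ v : Fin l ⊕ Fin m ⊕ Fin n, Ffun a₀ c₀ a₁ c₁ a₂ v < b := by
    rintro (i | i | i)
    · have := gfun_lt (a := a₀) (c := c₀) (i := i.val) (by omega)
      simp only [Ffun]; omega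
    · have := gfun_lt (a := a₁) (c := c₁) (i := i.val) (by omega)
      simp only [Ffun]; omega
    · have := gfun_lt (a := a₂) (c := c₂) (i := i.val) (by omega)
      simp only [Ffun]; omega
  set F := fun v : Fin l ⊕ Fin m ⊕ Fin n => Ffun a₀ c₀ a₁ c₁ a₂ v with hF
  refine ⟨fun v => ⟨F v, hFlt v⟩, ?_, ?_⟩
  · -- tree coloring
    have hmono : ∀ v w : Fin l ⊕ Fin m ⊕ Fin n, F v = F w → triPart v = triPart w := by
      rintro (i | i | i) (j | j | j) hE <;>
        simp only [hF, Ffun] at hE <;>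
        first
          | rfl
          | · exfalso
              first
                | (have hi := gfun_lt (a := a₀) (c := c₀) (i := i.val) (by omega))
                | (have hi := gfun_lt (a := a₁) (c := c₁) (i := i.val) (by omega))
                | (have hi := gfun_lt (a := a₂) (c := c₂) (i := i.val) (by omega))
              first
                | (have hj := gfun_lt (a := a₀) (c := c₀) (i := j.val) (by omega))
                | (have hj := gfun_lt (a := a₁) (c := c₁) (i := j.val) (by omega))
                | (have hj := gfun_lt (a := a₂) (c := c₂) (i := j.val) (by omega))
              omega
    have hnoadj : ∀ v w : Fin l ⊕ Fin m ⊕ Fin n,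
        (completeTripartiteGraph l m n).Adj v w → F v ≠ F w := by
      intro v w hadj hE
      exact hadj (hmono v w hE)
    constructor
    · intro c
      have hno : ∀ x y : ((fun v => (⟨F v, hFlt v⟩ : Fin b)) ⁻¹' {c}),
          ¬ ((completeTripartiteGraph l m n).induce _).Adj x y := by
        rintro ⟨x, hx⟩ ⟨y, hy⟩ hadj
        have hG : (completeTripartiteGraph l m n).Adj x y := by simpa using hadj
        have hx' : F x = c.val := congrArg Fin.val hx
        have hy' : F y = c.val := congrArg Fin.val hy
        exact hnoadj x y hG (hx'.trans hy'.symm)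
      intro x w hw
      cases w with
      | nil => exact hw.ne_nil rfl
      | cons h' p => exact hno _ _ h'
    · intro v
      have hempty : {w | (completeTripartiteGraph l m n).Adj v w ∧
          (⟨F w, hFlt w⟩ : Fin b) = ⟨F v, hFlt v⟩} = ∅ := by
        ext w
        simp only [Set.mem_setOf_eq, Set.mem_empty_iff_false, iff_false, not_and]
        intro hadj hE
        exact hnoadj v w hadj (congrArg Fin.val hE).symm
      rw [hempty]
      simp
  · have hsize : ∀ t : Fin b, ∃ w, 4 ≤ w ∧ w ≤ 5 ∧
        ((fun v => (⟨F v, hFlt v⟩ : Fin b)) ⁻¹' {t}).ncard = w := by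
      intro t
      obtain ⟨tv, htv⟩ := t
      rcases lt_or_ge tv (a₀+c₀) with ht | ht
      · obtain ⟨w, hw4, hw5, hw⟩ := fiber_gfun l a₀ c₀ h0 tv ht
        refine ⟨w, hw4, hw5, ?_⟩
        have hset : ((fun v => (⟨F v, hFlt v⟩ : Fin b)) ⁻¹' {(⟨tv, htv⟩ : Fin b)})
            = Sum.inl '' {x : Fin l | gfun a₀ x.val = tv} := by
          ext v
          rcases v with i | i | i <;>
            simp only [Set.mem_preimage, Set.mem_singleton_iff, Fin.mk.injEq, hF, Ffun,
              Set.mem_image, Set.mem_setOf_eq, Sum.inl.injEq, Sum.inr.injEq,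
              exists_eq_right, reduceCtorEq, and_false, false_and, exists_false, iff_false]
          · have hi := gfun_lt (a := a₁) (c := c₁) (i := i.val) (by omega)
            omega
          · have hi := gfun_lt (a := a₂) (c := c₂) (i := i.val) (by omega)
            omega
        rw [hset, Set.ncard_image_of_injective _ Sum.inl_injective]
        exact hw
      rcases lt_or_ge tv (a₀+c₀+a₁+c₁) with ht2 | ht2
      · obtain ⟨w, hw4, hw5, hw⟩ := fiber_gfun m a₁ c₁ h1 (tv - (a₀+c₀)) (by omega)
        refine ⟨w, hw4, hw5, ?_⟩
        have hset : ((fun v => (⟨F v, hFlt v⟩ : Fin b)) ⁻¹' {(⟨tv, htv⟩ : Fin b)})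
            = (fun x : Fin m => (Sum.inr (Sum.inl x) : Fin l ⊕ Fin m ⊕ Fin n)) ''
              {x : Fin m | gfun a₁ x.val = tv - (a₀+c₀)} := by
          ext v
          rcases v with i | i | i <;>
            simp only [Set.mem_preimage, Set.mem_singleton_iff, Fin.mk.injEq, hF, Ffun,
              Set.mem_image, Set.mem_setOf_eq, Sum.inl.injEq, Sum.inr.injEq,
              exists_eq_right, reduceCtorEq, and_false, false_and, exists_false, iff_false]
          · have hi := gfun_lt (a := a₀) (c := c₀) (i := i.val) (by omega)
            omega
          · omega
          · have hi := gfun_lt (a := a₂) (c := c₂) (i := i.val) (by omega)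
            omega
        rw [hset, Set.ncard_image_of_injective _
          (fun x y hxy => by simpa using hxy)]
        exact hw
      · obtain ⟨w, hw4, hw5, hw⟩ := fiber_gfun n a₂ c₂ h2 (tv - (a₀+c₀+a₁+c₁)) (by omega)
        refine ⟨w, hw4, hw5, ?_⟩
        have hset : ((fun v => (⟨F v, hFlt v⟩ : Fin b)) ⁻¹' {(⟨tv, htv⟩ : Fin b)})
            = (fun x : Fin n => (Sum.inr (Sum.inr x) : Fin l ⊕ Fin m ⊕ Fin n)) ''
              {x : Fin n | gfun a₂ x.val = tv - (a₀+c₀+a₁+c₁)} := by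
          ext v
          rcases v with i | i | i <;>
            simp only [Set.mem_preimage, Set.mem_singleton_iff, Fin.mk.injEq, hF, Ffun,
              Set.mem_image, Set.mem_setOf_eq, Sum.inl.injEq, Sum.inr.injEq,
              exists_eq_right, reduceCtorEq, and_false, false_and, exists_false, iff_false]
          · have hi := gfun_lt (a := a₀) (c := c₀) (i := i.val) (by omega)
            omega
          · have hi := gfun_lt (a := a₁) (c := c₁) (i := i.val) (by omega)
            omega
          · omega
        rw [hset, Set.ncard_image_of_injective _
          (fun x y hxy => by simpa using hxy)]
        exact hw
    intro t₁ t₂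
    obtain ⟨w1, hw1a, hw1b, hw1c⟩ := hsize t₁
    obtain ⟨w2, hw2a, hw2b, hw2c⟩ := hsize t₂
    rw [hw1c, hw2c]
    omega

end Statement17Aux

namespace Statement17Aux

lemma toB (l m n k0 k1 k2 c0 c1 c2 : ℕ) (hk0 : 1 ≤ k0) (hk1 : 1 ≤ k1) (hk2 : 1 ≤ k2)
    (hc0 : c0 ≤ k0) (hc1 : c1 ≤ k1) (hc2 : c2 ≤ k2) (hcs : c0+c1+c2 = 3)
    (hleq : l = 4*k0 + c0) (hmeq : m = 4*k1+c1) (hneq : n = 4*k2+c2) : ConditionB l m n := by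
  have h0 : c0 ≤ 3 := by omega
  have h1 : c1 ≤ 3 := by omega
  have h2 : c2 ≤ 3 := by omega
  interval_cases c0 <;> interval_cases c1 <;> interval_cases c2 <;>
    first
      | exact ⟨k0-2, k1, k2, by omega, by omega, by omega, Or.inl (by simp only [Prod.mk.injEq]; omega)⟩
      | exact ⟨k0, k1-2, k2, by omega, by omega, by omega, Or.inr (Or.inl (by simp only [Prod.mk.injEq]; omega))⟩
      | exact ⟨k0, k1, k2-2, by omega, by omega, by omega, Or.inr (Or.inr (Or.inl (by simp only [Prod.mk.injEq]; omega)))⟩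
      | exact ⟨k0-1, k1, k2, by omega, by omega, by omega, Or.inr (Or.inr (Or.inr (Or.inl (by simp only [Prod.mk.injEq]; omega))))⟩
      | exact ⟨k0-1, k1, k2, by omega, by omega, by omega, Or.inr (Or.inr (Or.inr (Or.inr (Or.inl (by simp only [Prod.mk.injEq]; omega)))))⟩
      | exact ⟨k0, k1-1, k2, by omega, by omega, by omega, Or.inr (Or.inr (Or.inr (Or.inr (Or.inr (Or.inl (by simp only [Prod.mk.injEq]; omega))))))⟩
      | exact ⟨k0, k1, k2-1, by omega, by omega, by omega, Or.inr (Or.inr (Or.inr (Or.inr (Or.inr (Or.inr (Or.inl (by simp only [Prod.mk.injEq]; omega)))))))⟩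
      | exact ⟨k0, k1-1, k2, by omega, by omega, by omega, Or.inr (Or.inr (Or.inr (Or.inr (Or.inr (Or.inr (Or.inr (Or.inl (by simp only [Prod.mk.injEq]; omega))))))))⟩
      | exact ⟨k0, k1, k2-1, by omega, by omega, by omega, Or.inr (Or.inr (Or.inr (Or.inr (Or.inr (Or.inr (Or.inr (Or.inr (Or.inl (by simp only [Prod.mk.injEq]; omega)))))))))⟩
      | exact ⟨k0, k1, k2, by omega, by omega, by omega, Or.inr (Or.inr (Or.inr (Or.inr (Or.inr (Or.inr (Or.inr (Or.inr (Or.inr (by simp only [Prod.mk.injEq]; omega)))))))))⟩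

end Statement17Aux

namespace Statement17Aux

lemma necessary {l m n b : ℕ} (hl : 0 < l) (hm : 0 < m) (hn : 0 < n) (hb : 0 < b)
    (hsum : l + m + n = 4*b+3)
    (H : HasEquitableTreeColoring2 (completeTripartiteGraph l m n) b) : ConditionB l m n := by
  classical
  obtain ⟨f, ⟨hacyc, hdeg⟩, hequit⟩ := H
  set G := completeTripartiteGraph l m n with hG
  -- class sizes
  set s : Fin b → ℕ := fun c => (f ⁻¹' {c}).ncard with hs
  have hequit' : ∀ c₁ c₂ : Fin b, s c₁ ≤ s c₂ + 1 := fun c₁ c₂ => hequit c₁ c₂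
  have hscard : ∀ c, s c = (Finset.univ.filter fun v => f v = c).card := by
    intro c
    have hset : f ⁻¹' {c} = ↑(Finset.univ.filter fun v => f v = c) := by ext v; simp
    simp only [hs]
    rw [hset, Set.ncard_coe_finset]
  have hsum' : ∑ c : Fin b, s c = l + m + n := by
    have hcard : Fintype.card (Fin l ⊕ Fin m ⊕ Fin n) = l + m + n := by
      simp [Fintype.card_sum]
      omega
    have hfib := Finset.card_eq_sum_card_fiberwise
      (f := f) (s := (Finset.univ : Finset (Fin l ⊕ Fin m ⊕ Fin n))) (t := Finset.univ)
      (fun x _ => Finset.mem_univ _)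
    rw [Finset.card_univ, hcard] at hfib
    exact (Finset.sum_congr rfl fun c _ => hscard c).trans hfib.symm
  have hge4 : ∀ c, 4 ≤ s c := by
    intro c
    have hsle : ∑ c' : Fin b, s c' ≤ ∑ _c' : Fin b, (s c + 1) :=
      Finset.sum_le_sum (fun c' _ => hequit c' c)
    rw [Finset.sum_const, Finset.card_univ, Fintype.card_fin, smul_eq_mul] at hsle
    rw [hsum'] at hsle
    nlinarith
  -- three distinct elements of the neighbourhood contradiction
  have key3 : ∀ v x y z : Fin l ⊕ Fin m ⊕ Fin n, x ≠ y → x ≠ z → y ≠ z →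
      (G.Adj v x ∧ f x = f v) → (G.Adj v y ∧ f y = f v) → (G.Adj v z ∧ f z = f v) → False := by
    intro v x y z hxy hxz hyz hx hy hz
    have hsub : ({x, y, z} : Set (Fin l ⊕ Fin m ⊕ Fin n)) ⊆ {w | G.Adj v w ∧ f w = f v} := by
      rintro u hu
      rcases hu with rfl | rfl | rfl
      · exact hx
      · exact hy
      · exact hz
    have h3 : ({x, y, z} : Set (Fin l ⊕ Fin m ⊕ Fin n)).ncard = 3 :=
      Set.ncard_eq_three.2 ⟨x, y, z, hxy, hxz, hyz, rfl⟩
    have hle := Set.ncard_le_ncard hsub (Set.toFinite _)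
    have := hdeg v
    omega
  -- every color class lies inside one part
  have hadjG : ∀ v w : Fin l ⊕ Fin m ⊕ Fin n, triPart v ≠ triPart w → G.Adj v w := by
    intro v w h
    exact h
  have hmono : ∀ v w, f v = f w → triPart v = triPart w := by
    intro v w hfvw
    by_contra hne
    set A := {u | f u = f v ∧ triPart u = triPart v} with hA
    set B := {u | f u = f v ∧ triPart u ≠ triPart v} with hB
    have hBle : B.ncard ≤ 2 := by
      refine le_trans (Set.ncard_le_ncard ?_ (Set.toFinite _)) (hdeg v)
      rintro u ⟨hu1, hu2⟩
      exact ⟨hadjG v u (fun hc => hu2 hc.symm), hu1⟩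
    have hAle : A.ncard ≤ 2 := by
      refine le_trans (Set.ncard_le_ncard ?_ (Set.toFinite _)) (hdeg w)
      rintro u ⟨hu1, hu2⟩
      exact ⟨hadjG w u (fun hc => hne ((hc.trans hu2).symm)), hu1.trans hfvw⟩
    have hAB : f ⁻¹' {f v} = A ∪ B := by
      ext u
      simp only [Set.mem_preimage, Set.mem_singleton_iff, Set.mem_union, hA, hB,
        Set.mem_setOf_eq]
      tauto
    have hdisj : Disjoint A B := by
      rw [Set.disjoint_left]
      rintro u ⟨_, h2⟩ ⟨_, h4⟩
      exact h4 h2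
    have hcardAB : (f ⁻¹' {f v}).ncard = A.ncard + B.ncard := by
      rw [hAB]
      exact Set.ncard_union_eq hdisj (Set.toFinite _) (Set.toFinite _)
    have h4 : 4 ≤ (f ⁻¹' {f v}).ncard := hge4 (f v)
    have hvA : v ∈ A := ⟨rfl, rfl⟩
    have hwB : w ∈ B := ⟨hfvw.symm, fun hc => hne hc.symm⟩
    have hA2 : A.ncard = 2 := by omega
    have hB2 : B.ncard = 2 := by omega
    obtain ⟨v', hv'A, hv'ne⟩ := Set.exists_ne_of_one_lt_ncard (s := A) (by omega) v
    obtain ⟨w', hw'B, hw'ne⟩ := Set.exists_ne_of_one_lt_ncard (s := B) (by omega) w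
    by_cases hw'p : triPart w' = triPart w
    · -- two distinct paths from v to v', contradicting acyclicity
      have hvS : v ∈ f ⁻¹' {f v} := rfl
      have hv'S : v' ∈ f ⁻¹' {f v} := hv'A.1
      have hwS : w ∈ f ⁻¹' {f v} := hfvw.symm
      have hw'S : w' ∈ f ⁻¹' {f v} := hw'B.1
      -- distinctness (as vertices)
      have hvw : v ≠ w := fun h => hne (congrArg triPart h)
      have hvw' : v ≠ w' := fun h => hw'B.2 (congrArg triPart h).symm
      have hv'w : v' ≠ w := fun h => hne (hv'A.2.symm.trans (congrArg triPart h))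
      have hv'w' : v' ≠ w' := fun h => hw'B.2 ((congrArg triPart h).symm.trans hv'A.2)
      -- adjacencies
      have ha1 : G.Adj v w := hadjG _ _ (fun hc => hne hc)
      have ha2 : G.Adj w v' := hadjG _ _ (fun hc => hne ((hc.trans hv'A.2).symm))
      have ha3 : G.Adj v w' := hadjG _ _ (fun hc => hw'B.2 hc.symm)
      have ha4 : G.Adj w' v' := hadjG _ _ (fun hc => hw'B.2 (hc.trans hv'A.2))
      set S := f ⁻¹' {f v} with hS
      let Gi := G.induce S
      let xv : S := ⟨v, hvS⟩
      let xv' : S := ⟨v', hv'S⟩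
      let xw : S := ⟨w, hwS⟩
      let xw' : S := ⟨w', hw'S⟩
      have hb1 : Gi.Adj xv xw := by exact ha1
      have hb2 : Gi.Adj xw xv' := by exact ha2
      have hb3 : Gi.Adj xv xw' := by exact ha3
      have hb4 : Gi.Adj xw' xv' := by exact ha4
      let p1 : Gi.Walk xv xv' := SimpleGraph.Walk.cons hb1 (SimpleGraph.Walk.cons hb2 SimpleGraph.Walk.nil)
      let p2 : Gi.Walk xv xv' := SimpleGraph.Walk.cons hb3 (SimpleGraph.Walk.cons hb4 SimpleGraph.Walk.nil)
      have hp1 : p1.IsPath := by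
        rw [SimpleGraph.Walk.isPath_def]
        simp [p1, SimpleGraph.Walk.support_cons, List.nodup_cons, xv, xw, xv',
          Subtype.ext_iff]
        exact ⟨⟨hvw, hv'ne.symm⟩, fun h => hv'w h.symm⟩
      have hp2 : p2.IsPath := by
        rw [SimpleGraph.Walk.isPath_def]
        simp [p2, SimpleGraph.Walk.support_cons, List.nodup_cons, xv, xw', xv',
          Subtype.ext_iff]
        exact ⟨⟨hvw', hv'ne.symm⟩, fun h => hv'w' h.symm⟩
      have huniq := SimpleGraph.isAcyclic_iff_path_unique.mp (hacyc (f v)) ⟨p1, hp1⟩ ⟨p2, hp2⟩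
      have hsupp := congrArg (fun q : Gi.Path xv xv' => q.1.support) huniq
      simp only [p1, p2, SimpleGraph.Walk.support_cons, SimpleGraph.Walk.support_nil,
        List.cons.injEq, true_and, and_true] at hsupp
      exact hw'ne (congrArg Subtype.val hsupp).symm
    · -- w' lies in the third part: w has three neighbours in its class
      have hne1 : v ≠ v' := hv'ne.symm
      have hne2 : v ≠ w' := fun h => hw'B.2 (congrArg triPart h).symm
      have hne3 : v' ≠ w' := fun h => hw'B.2 ((congrArg triPart h).symm.trans hv'A.2)
      refine key3 w v v' w' hne1 hne2 hne3
        ⟨hadjG _ _ (fun hc => hne hc.symm), hfvw⟩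
        ⟨hadjG _ _ (fun hc => hne ((hc.trans hv'A.2).symm)), hv'A.1.trans hfvw⟩
        ⟨hadjG _ _ (fun hc => hw'p hc.symm), hw'B.1.trans hfvw⟩
  have hdist : ∀ v w, triPart v ≠ triPart w → f v ≠ f w := fun v w h hf => h (hmono v w hf)
  have hb3 : 3 ≤ b := by
    have h01 : f (Sum.inl ⟨0, hl⟩) ≠ f (Sum.inr (Sum.inl ⟨0, hm⟩)) :=
      hdist _ _ (by simp only [triPart]; decide)
    have h02 : f (Sum.inl ⟨0, hl⟩) ≠ f (Sum.inr (Sum.inr ⟨0, hn⟩)) :=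
      hdist _ _ (by simp only [triPart]; decide)
    have h12 : f (Sum.inr (Sum.inl ⟨0, hm⟩)) ≠ f (Sum.inr (Sum.inr ⟨0, hn⟩)) :=
      hdist _ _ (by simp only [triPart]; decide)
    have hv01 : (f (Sum.inl ⟨0, hl⟩)).val ≠ (f (Sum.inr (Sum.inl ⟨0, hm⟩))).val :=
      fun h => h01 (Fin.ext h)
    have hv02 : (f (Sum.inl ⟨0, hl⟩)).val ≠ (f (Sum.inr (Sum.inr ⟨0, hn⟩))).val :=
      fun h => h02 (Fin.ext h)
    have hv12 : (f (Sum.inr (Sum.inl ⟨0, hm⟩))).val ≠ (f (Sum.inr (Sum.inr ⟨0, hn⟩))).val :=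
      fun h => h12 (Fin.ext h)
    omega
  have hle5 : ∀ c, s c ≤ 5 := by
    intro c
    by_contra hgt
    have hall : ∀ c', 5 ≤ s c' := fun c' => by have := hequit' c c'; omega
    have herase := Finset.sum_erase_add Finset.univ s (Finset.mem_univ c)
    have hlow : (Finset.univ.erase c).card • 5 ≤ ∑ c' ∈ Finset.univ.erase c, s c' :=
      Finset.card_nsmul_le_sum _ _ _ (fun x _ => hall x)
    rw [Finset.card_erase_of_mem (Finset.mem_univ c), Finset.card_univ, Fintype.card_fin,
      smul_eq_mul] at hlow
    have h6 : 6 ≤ s c := by omega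
    rw [hsum'] at herase
    omega
  have hne' : ∀ c : Fin b, (f ⁻¹' {c}).Nonempty := by
    intro c
    apply Set.nonempty_of_ncard_ne_zero
    have h4 := hge4 c
    simp only [hs] at h4
    omega
  choose rep hrep using hne'
  have hrep' : ∀ c, f (rep c) = c := hrep
  set T : Fin b → Fin 3 := fun c => triPart (rep c) with hTdef
  have hT : ∀ v, T (f v) = triPart v := fun v => hmono _ _ (hrep' (f v))
  set K : Fin 3 → Finset (Fin b) := fun p => Finset.univ.filter (fun c => T c = p) with hK
  have hpart : ∀ p : Fin 3,
      ({v : Fin l ⊕ Fin m ⊕ Fin n | triPart v = p}).ncard = ∑ c ∈ K p, s c := by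
    intro p
    have h1 : ({v : Fin l ⊕ Fin m ⊕ Fin n | triPart v = p})
        = (↑(Finset.univ.filter fun v : Fin l ⊕ Fin m ⊕ Fin n => triPart v = p) :
            Set (Fin l ⊕ Fin m ⊕ Fin n)) := by ext v; simp
    rw [h1, Set.ncard_coe_finset]
    have h2 := Finset.card_eq_sum_card_fiberwise
      (f := f) (s := Finset.univ.filter fun v => triPart v = p) (t := Finset.univ)
      (fun x _ => Finset.mem_univ _)
    rw [h2, hK]
    rw [Finset.sum_filter]
    refine Finset.sum_congr rfl ?_
    intro c _
    by_cases hc : T c = p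
    · rw [if_pos hc, hscard]
      congr 1
      ext v
      simp only [Finset.mem_filter, Finset.mem_univ, true_and]
      constructor
      · rintro ⟨_, h2'⟩; exact h2'
      · intro h2'
        refine ⟨?_, h2'⟩
        rw [← hT v, h2', hc]
    · rw [if_neg hc]
      rw [Finset.card_eq_zero]
      ext v
      simp only [Finset.mem_filter, Finset.mem_univ, true_and, Finset.notMem_empty,
        iff_false, not_and]
      intro h1' h2'
      subst h2'
      exact hc ((hT v).trans h1')
  have hpl : ({v : Fin l ⊕ Fin m ⊕ Fin n | triPart v = 0}).ncard = l := by
    have h1 : {v : Fin l ⊕ Fin m ⊕ Fin n | triPart v = 0} = Set.range Sum.inl := by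
      ext v
      rcases v with i | i | i <;> simp [triPart]
    rw [h1, ← Nat.card_coe_set_eq, Nat.card_range_of_injective Sum.inl_injective,
      Nat.card_eq_fintype_card, Fintype.card_fin]
  have hpm : ({v : Fin l ⊕ Fin m ⊕ Fin n | triPart v = 1}).ncard = m := by
    have h1 : {v : Fin l ⊕ Fin m ⊕ Fin n | triPart v = 1}
        = Set.range (fun i : Fin m => Sum.inr (Sum.inl i)) := by
      ext v
      rcases v with i | i | i <;> simp [triPart]
    rw [h1, ← Nat.card_coe_set_eq,
      Nat.card_range_of_injective (f := fun i : Fin m => Sum.inr (Sum.inl i))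
        (fun a b h => by simpa using h),
      Nat.card_eq_fintype_card, Fintype.card_fin]
  have hpn : ({v : Fin l ⊕ Fin m ⊕ Fin n | triPart v = 2}).ncard = n := by
    have h1 : {v : Fin l ⊕ Fin m ⊕ Fin n | triPart v = 2}
        = Set.range (fun i : Fin n => Sum.inr (Sum.inr i)) := by
      ext v
      rcases v with i | i | i <;> simp [triPart]
    rw [h1, ← Nat.card_coe_set_eq,
      Nat.card_range_of_injective (f := fun i : Fin n => Sum.inr (Sum.inr i))
        (fun a b h => by simpa using h),
      Nat.card_eq_fintype_card, Fintype.card_fin]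
  have hsplit : ∀ p, ∑ c ∈ K p, s c = 4 * (K p).card + ∑ c ∈ K p, (s c - 4) := by
    intro p
    have hterm : ∀ c ∈ K p, s c = 4 + (s c - 4) := fun c _ => by have := hge4 c; omega
    rw [Finset.sum_congr rfl hterm, Finset.sum_add_distrib, Finset.sum_const, smul_eq_mul]
    ring
  have hec : ∀ p, ∑ c ∈ K p, (s c - 4) ≤ (K p).card := by
    intro p
    calc ∑ c ∈ K p, (s c - 4) ≤ ∑ _c ∈ K p, 1 :=
          Finset.sum_le_sum (fun c _ => by have := hle5 c; omega)
    _ = (K p).card := by rw [Finset.sum_const, smul_eq_mul, mul_one]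
  have htotE : ∑ c : Fin b, (s c - 4) = 3 := by
    have h1 : ∑ c : Fin b, (s c - 4 + 4) = ∑ c : Fin b, s c :=
      Finset.sum_congr rfl (fun c _ => by have := hge4 c; omega)
    rw [Finset.sum_add_distrib, Finset.sum_const, Finset.card_univ, Fintype.card_fin,
      smul_eq_mul, hsum'] at h1
    omega
  have hpartition : (∑ c ∈ K 0, (s c - 4)) + (∑ c ∈ K 1, (s c - 4)) + (∑ c ∈ K 2, (s c - 4)) = 3 := by
    have h1 := Finset.sum_filter_add_sum_filter_not (Finset.univ : Finset (Fin b))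
      (fun c => T c = 0) (fun c => s c - 4)
    have h2 := Finset.sum_filter_add_sum_filter_not
      (Finset.univ.filter (fun c => ¬ T c = 0)) (fun c => T c = 1) (fun c => s c - 4)
    have h3 : (Finset.univ.filter (fun c : Fin b => ¬ T c = 0)).filter (fun c => T c = 1)
        = K 1 := by
      rw [hK, Finset.filter_filter]
      ext c
      simp only [Finset.mem_filter, Finset.mem_univ, true_and]
      omega
    have h4 : (Finset.univ.filter (fun c : Fin b => ¬ T c = 0)).filter (fun c => ¬ T c = 1)
        = K 2 := by
      rw [hK, Finset.filter_filter]
      ext c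
      simp only [Finset.mem_filter, Finset.mem_univ, true_and]
      omega
    have h5 : K 0 = Finset.univ.filter (fun c : Fin b => T c = 0) := by rw [hK]
    rw [htotE] at h1
    rw [h3, h4] at h2
    rw [← h5] at h1
    omega
  have hK0ne : 0 < (K 0).card := by
    refine Finset.card_pos.2 ⟨f (Sum.inl ⟨0, hl⟩), ?_⟩
    simp only [hK, Finset.mem_filter, Finset.mem_univ, true_and]
    exact hT _
  have hK1ne : 0 < (K 1).card := by
    refine Finset.card_pos.2 ⟨f (Sum.inr (Sum.inl ⟨0, hm⟩)), ?_⟩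
    simp only [hK, Finset.mem_filter, Finset.mem_univ, true_and]
    exact hT _
  have hK2ne : 0 < (K 2).card := by
    refine Finset.card_pos.2 ⟨f (Sum.inr (Sum.inr ⟨0, hn⟩)), ?_⟩
    simp only [hK, Finset.mem_filter, Finset.mem_univ, true_and]
    exact hT _
  refine toB l m n (K 0).card (K 1).card (K 2).card
    (∑ c ∈ K 0, (s c - 4)) (∑ c ∈ K 1, (s c - 4)) (∑ c ∈ K 2, (s c - 4))
    hK0ne hK1ne hK2ne (hec 0) (hec 1) (hec 2) hpartition ?_ ?_ ?_
  · rw [← hpl, hpart 0, hsplit 0]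
  · rw [← hpm, hpart 1, hsplit 1]
  · rw [← hpn, hpart 2, hsplit 2]

end Statement17Aux

theorem statement17 (l m n b : ℕ) (hl : 0 < l) (hlm : l ≤ m) (hmn : m ≤ n)
    (hb : 0 < b) (hsum : l + m + n = 4 * b + 3) :
    HasEquitableTreeColoring2 (completeTripartiteGraph l m n) b ↔
      ConditionB l m n := by
  have hm : 0 < m := lt_of_lt_of_le hl hlm
  have hn : 0 < n := lt_of_lt_of_le hm hmn
  constructor
  · intro H
    exact Statement17Aux.necessary hl hm hn hb hsum H
  · intro hB
    obtain ⟨j, h, k, hj, hh, hk, hc⟩ := hB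
    rcases hc with hc|hc|hc|hc|hc|hc|hc|hc|hc|hc <;>
        simp only [Prod.mk.injEq] at hc <;> obtain ⟨e1, e2, e3⟩ := hc
    · exact Statement17Aux.build (j-1) 3 h 0 k 0 (by omega) (by omega) (by omega) (by omega)
    · exact Statement17Aux.build j 0 (h-1) 3 k 0 (by omega) (by omega) (by omega) (by omega)
    · exact Statement17Aux.build j 0 h 0 (k-1) 3 (by omega) (by omega) (by omega) (by omega)
    · exact Statement17Aux.build (j-1) 2 (h-1) 1 k 0 (by omega) (by omega) (by omega) (by omega)
    · exact Statement17Aux.build (j-1) 2 h 0 (k-1) 1 (by omega) (by omega) (by omega) (by omega)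
    · exact Statement17Aux.build (j-1) 1 (h-1) 2 k 0 (by omega) (by omega) (by omega) (by omega)
    · exact Statement17Aux.build (j-1) 1 h 0 (k-1) 2 (by omega) (by omega) (by omega) (by omega)
    · exact Statement17Aux.build j 0 (h-1) 2 (k-1) 1 (by omega) (by omega) (by omega) (by omega)
    · exact Statement17Aux.build j 0 (h-1) 1 (k-1) 2 (by omega) (by omega) (by omega) (by omega)
    · exact Statement17Aux.build (j-1) 1 (h-1) 1 (k-1) 1 (by omega) (by omega) (by omega) (by omega)
end
end
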